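/- arXiv:math-ph/9912020 — 8 statements merged into one kernel-verified Lean document; each statement's English description precedes it below -/
import Mathlib

section
/- For every fixed real x > 0, the limit as m → -1 from the right of V_m(x) equals 1/x; equivalently, lim_{m→-1⁺} x · V_m(x) = 1. This justifies the convention V_{-1}(x) = 1/x. -/
open MeasureTheory Real Set Filter Topology

/-- The one-dimensional regularized Coulomb potential `V_m(x)`. -/
noncomputable def V (m x : ℝ) : ℝ :=
  (1 / Real.Gamma (m + 1)) *
    ∫ u in Set.Ioi (0:ℝ), u ^ m * Real.exp (-u) / Real.sqrt (x ^ 2 + u)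

lemma sqrt_lb {x u : ℝ} (hx : 0 < x) (hu : 0 ≤ u) : x ≤ Real.sqrt (x ^ 2 + u) := by
  rw [Real.le_sqrt hx.le (by positivity)]
  linarith

lemma sqrt_ub {x u : ℝ} (hx : 0 < x) (hu : 0 ≤ u) :
    Real.sqrt (x ^ 2 + u) ≤ x + u / (2 * x) := by
  have h : x ^ 2 + u ≤ (x + u / (2 * x)) ^ 2 := by
    have hx' : x ≠ 0 := hx.ne'
    field_simp
    nlinarith [sq_nonneg u, sq_nonneg x, mul_pos hx hx]
  calc Real.sqrt (x ^ 2 + u) ≤ Real.sqrt ((x + u / (2 * x)) ^ 2) := Real.sqrt_le_sqrt h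
    _ = x + u / (2 * x) := Real.sqrt_sq (by positivity)

lemma inv_sqrt_bound {x u : ℝ} (hx : 0 < x) (hu : 0 ≤ u) :
    1 / x - 1 / Real.sqrt (x ^ 2 + u) ≤ u / (2 * x ^ 3) := by
  have hs : 0 < Real.sqrt (x ^ 2 + u) := lt_of_lt_of_le hx (sqrt_lb hx hu)
  have h1 : 1 / x - 1 / Real.sqrt (x ^ 2 + u)
      = (Real.sqrt (x ^ 2 + u) - x) / (x * Real.sqrt (x ^ 2 + u)) := by
    field_simp
  rw [h1]
  have hnum : Real.sqrt (x ^ 2 + u) - x ≤ u / (2 * x) := by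
    have := sqrt_ub hx hu; linarith
  calc (Real.sqrt (x ^ 2 + u) - x) / (x * Real.sqrt (x ^ 2 + u))
      ≤ (u / (2 * x)) / (x * x) := by
        apply div_le_div₀ (by positivity) hnum (by positivity)
        have := sqrt_lb hx hu
        nlinarith
    _ = u / (2 * x ^ 3) := by rw [div_div]; congr 1; ring

lemma V_sub_bound (x : ℝ) (hx : 0 < x) (m : ℝ) (hm : -1 < m) :
    |V m x - 1 / x| ≤ (m + 1) / (2 * x ^ 3) := by
  have hm1 : (0:ℝ) < m + 1 := by linarith
  have hm2 : (0:ℝ) < m + 2 := by linarith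
  have hΓ : 0 < Real.Gamma (m + 1) := Real.Gamma_pos_of_pos hm1
  -- integrability of u^m * exp(-u)
  have hint2 : IntegrableOn (fun u : ℝ => u ^ m * Real.exp (-u)) (Ioi 0) := by
    have := Real.GammaIntegral_convergent hm1
    simpa [mul_comm] using this
  have hint3 : IntegrableOn (fun u : ℝ => u ^ (m + 1) * Real.exp (-u)) (Ioi 0) := by
    have := Real.GammaIntegral_convergent hm2
    simpa [mul_comm, show m + 2 - 1 = m + 1 by ring] using this
  -- measurability of the main integrand
  have hmeas : AEStronglyMeasurable
      (fun u : ℝ => u ^ m * Real.exp (-u) / Real.sqrt (x ^ 2 + u))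
      (volume.restrict (Ioi 0)) := by
    apply Measurable.aestronglyMeasurable
    fun_prop
  -- integrability of the main integrand
  have hint1 : IntegrableOn
      (fun u : ℝ => u ^ m * Real.exp (-u) / Real.sqrt (x ^ 2 + u)) (Ioi 0) := by
    apply Integrable.mono' (hint2.const_mul x⁻¹) hmeas
    filter_upwards [self_mem_ae_restrict measurableSet_Ioi] with u hu
    have hu0 : (0:ℝ) < u := hu
    have hs : x ≤ Real.sqrt (x ^ 2 + u) := sqrt_lb hx hu0.le
    have hfu : 0 ≤ u ^ m * Real.exp (-u) / Real.sqrt (x ^ 2 + u) := by positivity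
    rw [Real.norm_eq_abs, abs_of_nonneg hfu]
    rw [inv_mul_eq_div]
    gcongr
  -- value of ∫ u^m exp(-u) = Γ(m+1)
  have hI2 : ∫ u in Ioi (0:ℝ), u ^ m * Real.exp (-u) = Real.Gamma (m + 1) := by
    rw [Real.Gamma_eq_integral hm1]
    simp [mul_comm, show m + 1 - 1 = m by ring]
  have hI3 : ∫ u in Ioi (0:ℝ), u ^ (m + 1) * Real.exp (-u) = (m + 1) * Real.Gamma (m + 1) := by
    have : Real.Gamma (m + 2) = (m + 1) * Real.Gamma (m + 1) := by
      rw [show (m:ℝ) + 2 = (m + 1) + 1 by ring]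
      exact Real.Gamma_add_one hm1.ne'
    rw [← this, Real.Gamma_eq_integral hm2]
    simp [mul_comm, show m + 2 - 1 = m + 1 by ring]
  -- key bound on the difference integral
  set D : ℝ → ℝ := fun u =>
    u ^ m * Real.exp (-u) / Real.sqrt (x ^ 2 + u) - x⁻¹ * (u ^ m * Real.exp (-u)) with hD
  have hintD : IntegrableOn D (Ioi 0) := hint1.sub (hint2.const_mul x⁻¹)
  have hbound : ‖∫ u in Ioi (0:ℝ), D u‖ ≤
      ∫ u in Ioi (0:ℝ), u ^ (m + 1) * Real.exp (-u) / (2 * x ^ 3) := by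
    apply MeasureTheory.norm_integral_le_of_norm_le (hint3.div_const _)
    filter_upwards [self_mem_ae_restrict measurableSet_Ioi] with u hu
    have hu0 : (0:ℝ) < u := hu
    have hs : x ≤ Real.sqrt (x ^ 2 + u) := sqrt_lb hx hu0.le
    have hs0 : (0:ℝ) < Real.sqrt (x ^ 2 + u) := lt_of_lt_of_le hx hs
    have hle : u ^ m * Real.exp (-u) / Real.sqrt (x ^ 2 + u)
        ≤ x⁻¹ * (u ^ m * Real.exp (-u)) := by
      rw [inv_mul_eq_div]
      gcongr
    have habs : ‖D u‖ = u ^ m * Real.exp (-u) *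
        (1 / x - 1 / Real.sqrt (x ^ 2 + u)) := by
      rw [Real.norm_eq_abs, hD]
      rw [abs_of_nonpos (by simpa using sub_nonpos.2 hle)]
      field_simp
      all_goals ring
    rw [habs]
    calc u ^ m * Real.exp (-u) * (1 / x - 1 / Real.sqrt (x ^ 2 + u))
        ≤ u ^ m * Real.exp (-u) * (u / (2 * x ^ 3)) := by
          apply mul_le_mul_of_nonneg_left (inv_sqrt_bound hx hu0.le) (by positivity)
      _ = u ^ (m + 1) * Real.exp (-u) / (2 * x ^ 3) := by
          rw [Real.rpow_add_one hu0.ne']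
          ring
  have hDint : ∫ u in Ioi (0:ℝ), D u =
      (∫ u in Ioi (0:ℝ), u ^ m * Real.exp (-u) / Real.sqrt (x ^ 2 + u))
        - x⁻¹ * Real.Gamma (m + 1) := by
    rw [hD, integral_sub hint1 (hint2.const_mul x⁻¹), MeasureTheory.integral_const_mul _ _, hI2]
  have hRHS : ∫ u in Ioi (0:ℝ), u ^ (m + 1) * Real.exp (-u) / (2 * x ^ 3)
      = (m + 1) * Real.Gamma (m + 1) / (2 * x ^ 3) := by
    rw [integral_div, hI3]
  -- put it together
  have hV : V m x - 1 / x = (1 / Real.Gamma (m + 1)) * ∫ u in Ioi (0:ℝ), D u := by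
    rw [hDint, V]
    field_simp
  rw [hV, abs_mul, abs_of_nonneg (by positivity : (0:ℝ) ≤ 1 / Real.Gamma (m + 1))]
  have : |∫ u in Ioi (0:ℝ), D u| ≤ (m + 1) * Real.Gamma (m + 1) / (2 * x ^ 3) := by
    calc |∫ u in Ioi (0:ℝ), D u| ≤ _ := hbound
      _ = _ := hRHS
  calc 1 / Real.Gamma (m + 1) * |∫ u in Ioi (0:ℝ), D u|
      ≤ 1 / Real.Gamma (m + 1) * ((m + 1) * Real.Gamma (m + 1) / (2 * x ^ 3)) := by
        apply mul_le_mul_of_nonneg_left this (by positivity)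
    _ = (m + 1) / (2 * x ^ 3) := by field_simp

theorem tendsto_V_to_inv (x : ℝ) (hx : 0 < x) :
    Filter.Tendsto (fun m => V m x) (nhdsWithin (-1) (Set.Ioi (-1))) (nhds (1 / x)) ∧
    Filter.Tendsto (fun m => x * V m x) (nhdsWithin (-1) (Set.Ioi (-1))) (nhds 1) := by
  have h1 : Filter.Tendsto (fun m => V m x) (nhdsWithin (-1) (Set.Ioi (-1))) (nhds (1 / x)) := by
    rw [tendsto_iff_norm_sub_tendsto_zero]
    apply squeeze_zero' (Filter.Eventually.of_forall fun m => norm_nonneg _)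
      (g := fun m => (m + 1) / (2 * x ^ 3))
    · filter_upwards [self_mem_nhdsWithin] with m hm
      simpa [Real.norm_eq_abs] using V_sub_bound x hx m hm
    · have : Filter.Tendsto (fun m : ℝ => (m + 1) / (2 * x ^ 3)) (nhds (-1))
          (nhds (((-1) + 1) / (2 * x ^ 3))) := by
        apply Filter.Tendsto.div_const
        exact (continuous_id.add continuous_const).tendsto _
      simpa using this.mono_left nhdsWithin_le_nhds
  refine ⟨h1, ?_⟩
  have := h1.const_mul x
  simpa [mul_one_div, div_self hx.ne', mul_inv_cancel₀ hx.ne'] using this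
end

section
/- For every fixed real x > 0, the function m ↦ V_m(x) is strictly decreasing on (-1, ∞); in particular, for all m > -1, V_{m+1}(x) < V_m(x) < 1/x. -/
open MeasureTheory Real Set

/-- Strict comparison of set integrals on `Ioi 0`, allowing equality at one point. -/
lemma myInt_lt {f g : ℝ → ℝ} (hf : IntegrableOn f (Ioi 0))
    (hg : IntegrableOn g (Ioi 0)) (u0 : ℝ)
    (hle : ∀ u ∈ Ioi (0:ℝ), f u ≤ g u)
    (hlt : ∀ u ∈ Ioi (0:ℝ), u ≠ u0 → f u < g u) :
    ∫ u in Ioi (0:ℝ), f u < ∫ u in Ioi (0:ℝ), g u := by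
  have hsub : IntegrableOn (fun u => g u - f u) (Ioi 0) := hg.sub hf
  have hnn : 0 ≤ᵐ[volume.restrict (Ioi (0:ℝ))] fun u => g u - f u :=
    (ae_restrict_iff' measurableSet_Ioi).2
      (Filter.Eventually.of_forall fun u hu => sub_nonneg.2 (hle u hu))
  have hpos : 0 < ∫ u in Ioi (0:ℝ), (g u - f u) := by
    rw [setIntegral_pos_iff_support_of_nonneg_ae hnn hsub]
    have hsubset : Ioi (0:ℝ) \ {u0} ⊆
        Function.support (fun u => g u - f u) ∩ Ioi 0 := by
      intro u hu
      refine ⟨?_, hu.1⟩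
      have := hlt u hu.1 (by simpa using hu.2)
      simp only [Function.mem_support]
      intro h
      have : f u = g u := by linarith [sub_eq_zero.mp h]
      linarith [hlt u hu.1 (by simpa using hu.2)]
    have h1 : volume (Ioi (0:ℝ) \ {u0}) = volume (Ioi (0:ℝ)) :=
      measure_diff_null (measure_singleton u0)
    have h2 : (0:ENNReal) < volume (Ioi (0:ℝ) \ {u0}) := by
      rw [h1, Real.volume_Ioi]; exact ENNReal.zero_lt_top
    exact h2.trans_le (measure_mono hsubset)
  have := integral_sub hg hf
  rw [this] at hpos
  linarith

/-- Integrability of `u ^ m * exp (-u)` on `Ioi 0` for `m > -1`. -/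
lemma myBase_integrable {m : ℝ} (hm : -1 < m) :
    IntegrableOn (fun u : ℝ => u ^ m * Real.exp (-u)) (Ioi 0) := by
  have h := Real.GammaIntegral_convergent (s := m + 1) (by linarith)
  refine h.congr_fun (fun u _ => ?_) measurableSet_Ioi
  rw [add_sub_cancel_right, mul_comm]

lemma mySqrt_pos {x u : ℝ} (hx : 0 < x) (hu : 0 ≤ u) :
    0 < Real.sqrt (x ^ 2 + u) :=
  Real.sqrt_pos.2 (by positivity)

/-- Continuity of the integrand on `Ioi 0`. -/
lemma myContOn {m x : ℝ} (hx : 0 < x) :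
    ContinuousOn (fun u : ℝ => u ^ m * Real.exp (-u) / Real.sqrt (x ^ 2 + u))
      (Ioi 0) := by
  have h1 : ContinuousOn (fun u : ℝ => u ^ m) (Ioi 0) :=
    ContinuousOn.rpow_const continuousOn_id fun u hu => Or.inl (ne_of_gt hu)
  have h2 : ContinuousOn (fun u : ℝ => Real.exp (-u)) (Ioi 0) :=
    (Real.continuous_exp.comp continuous_neg).continuousOn
  have h3 : ContinuousOn (fun u : ℝ => Real.sqrt (x ^ 2 + u)) (Ioi 0) :=
    (Real.continuous_sqrt.comp (continuous_const.add continuous_id)).continuousOn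
  exact (h1.mul h2).div h3 fun u hu => (mySqrt_pos hx (le_of_lt hu)).ne'

/-- Integrability of the full integrand. -/
lemma myIntegrand_integrable {m x : ℝ} (hm : -1 < m) (hx : 0 < x) :
    IntegrableOn (fun u : ℝ => u ^ m * Real.exp (-u) / Real.sqrt (x ^ 2 + u))
      (Ioi 0) := by
  have hmeas : AEStronglyMeasurable
      (fun u : ℝ => u ^ m * Real.exp (-u) / Real.sqrt (x ^ 2 + u))
      (volume.restrict (Ioi 0)) :=
    (myContOn hx).aestronglyMeasurable measurableSet_Ioi
  refine Integrable.mono' ((myBase_integrable hm).mul_const x⁻¹) hmeas ?_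
  refine (ae_restrict_iff' measurableSet_Ioi).2 (Filter.Eventually.of_forall
    fun u hu => ?_)
  have hu : 0 < u := hu
  have hnum : 0 ≤ u ^ m * Real.exp (-u) := by positivity
  have hs : x ≤ Real.sqrt (x ^ 2 + u) := by
    have : Real.sqrt (x ^ 2) ≤ Real.sqrt (x ^ 2 + u) :=
      Real.sqrt_le_sqrt (by linarith)
    rwa [Real.sqrt_sq hx.le] at this
  have hf_nonneg : 0 ≤ u ^ m * Real.exp (-u) / Real.sqrt (x ^ 2 + u) :=
    div_nonneg hnum (mySqrt_pos hx hu.le).le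
  rw [Real.norm_eq_abs, abs_of_nonneg hf_nonneg]
  rw [div_eq_mul_inv]
  gcongr

/-- The normalization integral. -/
lemma myGamma_int {m : ℝ} (hm : -1 < m) :
    ∫ u in Ioi (0:ℝ), u ^ m * Real.exp (-u) = Real.Gamma (m + 1) := by
  rw [Real.Gamma_eq_integral (by linarith : (0:ℝ) < m + 1)]
  refine setIntegral_congr_fun measurableSet_Ioi fun u _ => ?_
  rw [add_sub_cancel_right, mul_comm]

/-- The upper bound `V m x < 1 / x`. -/
lemma myV_lt_inv {m x : ℝ} (hm : -1 < m) (hx : 0 < x) : V m x < 1 / x := by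
  have hΓ : 0 < Real.Gamma (m + 1) := Real.Gamma_pos_of_pos (by linarith)
  have hI : ∫ u in Ioi (0:ℝ), u ^ m * Real.exp (-u) / Real.sqrt (x ^ 2 + u)
      < ∫ u in Ioi (0:ℝ), u ^ m * Real.exp (-u) * x⁻¹ := by
    refine myInt_lt (myIntegrand_integrable hm hx)
      ((myBase_integrable hm).mul_const x⁻¹) 0 (fun u hu => ?_) (fun u hu _ => ?_)
    · refine le_of_lt ?_
      have hu : 0 < u := hu
      have hnum : 0 < u ^ m * Real.exp (-u) := by positivity
      have hs : x < Real.sqrt (x ^ 2 + u) := by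
        have : Real.sqrt (x ^ 2) < Real.sqrt (x ^ 2 + u) :=
          Real.sqrt_lt_sqrt (sq_nonneg x) (by linarith)
        rwa [Real.sqrt_sq hx.le] at this
      rw [div_eq_mul_inv]
      gcongr
    · have hu : 0 < u := hu
      have hnum : 0 < u ^ m * Real.exp (-u) := by positivity
      have hs : x < Real.sqrt (x ^ 2 + u) := by
        have : Real.sqrt (x ^ 2) < Real.sqrt (x ^ 2 + u) :=
          Real.sqrt_lt_sqrt (sq_nonneg x) (by linarith)
        rwa [Real.sqrt_sq hx.le] at this
      rw [div_eq_mul_inv]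
      gcongr
  have hI2 : ∫ u in Ioi (0:ℝ), u ^ m * Real.exp (-u) * x⁻¹
      = Real.Gamma (m + 1) * x⁻¹ := by
    rw [integral_mul_const, myGamma_int hm]
  have hfin : V m x < (1 / Real.Gamma (m + 1)) * (Real.Gamma (m + 1) * x⁻¹) := by
    unfold V
    exact mul_lt_mul_of_pos_left (hI2 ▸ hI) (by positivity)
  have heq : (1 / Real.Gamma (m + 1)) * (Real.Gamma (m + 1) * x⁻¹) = 1 / x := by
    field_simp
  linarith

/-- Strict decrease in `m`. -/
lemma myV_anti {m1 m2 x : ℝ} (h1 : -1 < m1) (h12 : m1 < m2) (hx : 0 < x) :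
    V m2 x < V m1 x := by
  have h2 : -1 < m2 := h1.trans h12
  set Γ1 := Real.Gamma (m1 + 1) with hΓ1def
  set Γ2 := Real.Gamma (m2 + 1) with hΓ2def
  have hΓ1 : 0 < Γ1 := Real.Gamma_pos_of_pos (by linarith)
  have hΓ2 : 0 < Γ2 := Real.Gamma_pos_of_pos (by linarith)
  set c1 := Γ1⁻¹ with hc1def
  set c2 := Γ2⁻¹ with hc2def
  have hc1 : 0 < c1 := inv_pos.2 hΓ1
  have hc2 : 0 < c2 := inv_pos.2 hΓ2
  set d := m2 - m1 with hddef
  have hd : 0 < d := by simp [hddef]; linarith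
  set u0 := (Γ2 / Γ1) ^ d⁻¹ with hu0def
  have hrat : 0 < Γ2 / Γ1 := div_pos hΓ2 hΓ1
  have hu0 : 0 < u0 := Real.rpow_pos_of_pos hrat _
  have hu0d : u0 ^ d = Γ2 / Γ1 := by
    rw [hu0def, ← Real.rpow_mul hrat.le, inv_mul_cancel₀ hd.ne', Real.rpow_one]
  set k := (Real.sqrt (x ^ 2 + u0))⁻¹ with hkdef
  -- sign of g u := c2 * u ^ m2 - c1 * u ^ m1
  have hsplit : ∀ u : ℝ, 0 < u → u ^ m2 = u ^ m1 * u ^ d := by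
    intro u hu
    rw [← Real.rpow_add hu]
    congr 1
    simp [hddef]
  have hg_neg : ∀ u : ℝ, 0 < u → u < u0 → c2 * u ^ m2 - c1 * u ^ m1 < 0 := by
    intro u hu hult
    have hud : u ^ d < Γ2 / Γ1 := by
      rw [← hu0d]; exact Real.rpow_lt_rpow hu.le hult hd
    have hp : 0 < u ^ m1 := Real.rpow_pos_of_pos hu _
    rw [hsplit u hu]
    have key : c2 * (u ^ m1 * u ^ d) < c2 * (u ^ m1 * (Γ2 / Γ1)) := by
      apply mul_lt_mul_of_pos_left _ hc2
      exact mul_lt_mul_of_pos_left hud hp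
    have heq : c2 * (u ^ m1 * (Γ2 / Γ1)) = c1 * u ^ m1 := by
      rw [hc1def, hc2def]; field_simp
    linarith
  have hg_pos : ∀ u : ℝ, 0 < u → u0 < u → 0 < c2 * u ^ m2 - c1 * u ^ m1 := by
    intro u hu hult
    have hud : Γ2 / Γ1 < u ^ d := by
      rw [← hu0d]; exact Real.rpow_lt_rpow hu0.le hult hd
    have hp : 0 < u ^ m1 := Real.rpow_pos_of_pos hu _
    rw [hsplit u hu]
    have key : c2 * (u ^ m1 * (Γ2 / Γ1)) < c2 * (u ^ m1 * u ^ d) := by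
      apply mul_lt_mul_of_pos_left _ hc2
      exact mul_lt_mul_of_pos_left hud hp
    have heq : c2 * (u ^ m1 * (Γ2 / Γ1)) = c1 * u ^ m1 := by
      rw [hc1def, hc2def]; field_simp
    linarith
  -- monotone comparison of the kernel
  have hF_gt : ∀ u : ℝ, 0 < u → u < u0 →
      k < (Real.sqrt (x ^ 2 + u))⁻¹ := by
    intro u hu hult
    have h : Real.sqrt (x ^ 2 + u) < Real.sqrt (x ^ 2 + u0) :=
      Real.sqrt_lt_sqrt (by positivity) (by linarith)
    exact inv_strictAnti₀ (mySqrt_pos hx hu.le) h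
  have hF_lt : ∀ u : ℝ, 0 < u → u0 < u →
      (Real.sqrt (x ^ 2 + u))⁻¹ < k := by
    intro u hu hult
    have h : Real.sqrt (x ^ 2 + u0) < Real.sqrt (x ^ 2 + u) :=
      Real.sqrt_lt_sqrt (by positivity) (by linarith)
    exact inv_strictAnti₀ (mySqrt_pos hx hu0.le) h
  -- the key signed function
  set φ : ℝ → ℝ := fun u => (c2 * u ^ m2 - c1 * u ^ m1) * Real.exp (-u) *
    ((Real.sqrt (x ^ 2 + u))⁻¹ - k) with hφdef
  have hφ_le : ∀ u ∈ Ioi (0:ℝ), φ u ≤ 0 := by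
    intro u hu
    have hu : 0 < u := hu
    have hexp : 0 < Real.exp (-u) := Real.exp_pos _
    rcases lt_trichotomy u u0 with h | h | h
    · have := hg_neg u hu h
      have hk := hF_gt u hu h
      have : φ u < 0 :=
        mul_neg_of_neg_of_pos (mul_neg_of_neg_of_pos this hexp) (by linarith)
      linarith
    · simp [hφdef, h, hkdef]
    · have := hg_pos u hu h
      have hk := hF_lt u hu h
      have : φ u < 0 :=
        mul_neg_of_pos_of_neg (mul_pos this hexp) (by linarith)
      linarith
  have hφ_lt : ∀ u ∈ Ioi (0:ℝ), u ≠ u0 → φ u < 0 := by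
    intro u hu hne
    have hu : 0 < u := hu
    have hexp : 0 < Real.exp (-u) := Real.exp_pos _
    rcases lt_trichotomy u u0 with h | h | h
    · have := hg_neg u hu h
      have hk := hF_gt u hu h
      exact mul_neg_of_neg_of_pos (mul_neg_of_neg_of_pos this hexp) (by linarith)
    · exact absurd h hne
    · have := hg_pos u hu h
      have hk := hF_lt u hu h
      exact mul_neg_of_pos_of_neg (mul_pos this hexp) (by linarith)
  -- integrability pieces
  have hA1 : IntegrableOn
      (fun u : ℝ => u ^ m1 * Real.exp (-u) / Real.sqrt (x ^ 2 + u)) (Ioi 0) :=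
    myIntegrand_integrable h1 hx
  have hA2 : IntegrableOn
      (fun u : ℝ => u ^ m2 * Real.exp (-u) / Real.sqrt (x ^ 2 + u)) (Ioi 0) :=
    myIntegrand_integrable h2 hx
  have hB1 : IntegrableOn (fun u : ℝ => u ^ m1 * Real.exp (-u)) (Ioi 0) :=
    myBase_integrable h1
  have hB2 : IntegrableOn (fun u : ℝ => u ^ m2 * Real.exp (-u)) (Ioi 0) :=
    myBase_integrable h2
  have hφ_eq : φ = fun u : ℝ =>
      (c2 * (u ^ m2 * Real.exp (-u) / Real.sqrt (x ^ 2 + u)) -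
        c1 * (u ^ m1 * Real.exp (-u) / Real.sqrt (x ^ 2 + u))) -
      k * (c2 * (u ^ m2 * Real.exp (-u)) - c1 * (u ^ m1 * Real.exp (-u))) := by
    funext u
    simp only [hφdef, div_eq_mul_inv]
    ring
  have hφ_int : IntegrableOn φ (Ioi 0) := by
    rw [hφ_eq]
    exact ((hA2.const_mul c2).sub (hA1.const_mul c1)).sub
      (((hB2.const_mul c2).sub (hB1.const_mul c1)).const_mul k)
  -- the integral of φ is negative
  have hneg : ∫ u in Ioi (0:ℝ), φ u < 0 := by
    have h0 : IntegrableOn (fun _ : ℝ => (0:ℝ)) (Ioi 0) := integrableOn_zero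
    have := myInt_lt hφ_int h0 u0 hφ_le hφ_lt
    simpa using this
  -- compute the integral of φ
  have hS1 : IntegrableOn (fun u : ℝ =>
      c2 * (u ^ m2 * Real.exp (-u) / Real.sqrt (x ^ 2 + u)) -
      c1 * (u ^ m1 * Real.exp (-u) / Real.sqrt (x ^ 2 + u))) (Ioi 0) :=
    (hA2.const_mul c2).sub (hA1.const_mul c1)
  have hS2 : IntegrableOn (fun u : ℝ =>
      c2 * (u ^ m2 * Real.exp (-u)) - c1 * (u ^ m1 * Real.exp (-u))) (Ioi 0) :=
    (hB2.const_mul c2).sub (hB1.const_mul c1)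
  have hval : ∫ u in Ioi (0:ℝ), φ u = V m2 x - V m1 x := by
    simp only [hφ_eq]
    rw [integral_sub hS1 (hS2.const_mul k),
      integral_sub (hA2.const_mul c2) (hA1.const_mul c1),
      integral_const_mul, integral_const_mul, integral_const_mul,
      integral_sub (hB2.const_mul c2) (hB1.const_mul c1),
      integral_const_mul, integral_const_mul,
      myGamma_int h1, myGamma_int h2]
    have hz : c2 * Real.Gamma (m2 + 1) - c1 * Real.Gamma (m1 + 1) = 0 := by
      rw [hc1def, hc2def, hΓ1def, hΓ2def]; field_simp
      rw [div_self (Real.Gamma_pos_of_pos (by linarith : (0:ℝ) < m2 + 1)).ne',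
        div_self (Real.Gamma_pos_of_pos (by linarith : (0:ℝ) < m1 + 1)).ne', sub_self]
    rw [hz, mul_zero, sub_zero]
    unfold V
    rw [one_div, one_div, hc1def, hc2def, hΓ1def, hΓ2def]
  linarith [hval ▸ hneg]

theorem V_strictAnti_in_m (x : ℝ) (hx : 0 < x) :
    StrictAntiOn (fun m => V m x) (Set.Ioi (-1)) ∧
    ∀ m : ℝ, -1 < m → V (m + 1) x < V m x ∧ V m x < 1 / x := by
  constructor
  · intro m1 hm1 m2 _ h12
    exact myV_anti hm1 h12 hx
  · intro m hm
    exact ⟨myV_anti hm (lt_add_one m) hx, myV_lt_inv hm hx⟩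
end

section
/- For every fixed real x > 0, the function m ↦ m · V_m(x) is increasing in m on (-1, ∞). -/
open MeasureTheory Real Set Filter Topology


/-- auxiliary integrability lemma -/
lemma integrable_aux {k c : ℝ} (hk : -1 < k) {p : ℝ → ℝ}
    (hp : ContinuousOn p (Ioi 0))
    (hb : ∀ u ∈ Ioi (0:ℝ), |p u| ≤ c) :
    IntegrableOn (fun u => u ^ k * Real.exp (-u) * p u) (Ioi (0:ℝ)) := by
  have hG := Real.GammaIntegral_convergent (show (0:ℝ) < k + 1 by linarith)
  simp only [add_sub_cancel_right] at hG
  have hdom : IntegrableOn (fun u : ℝ => c * (Real.exp (-u) * u ^ k)) (Ioi (0:ℝ)) :=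
    hG.const_mul c
  have hmeas : AEStronglyMeasurable (fun u : ℝ => u ^ k * Real.exp (-u) * p u)
      (volume.restrict (Ioi 0)) := by
    apply ContinuousOn.aestronglyMeasurable _ measurableSet_Ioi
    apply ContinuousOn.mul _ hp
    apply ContinuousOn.mul _ (Real.continuous_exp.comp continuous_neg).continuousOn
    intro u hu
    exact (Real.continuousAt_rpow_const u k (Or.inl (ne_of_gt hu))).continuousWithinAt
  refine Integrable.mono' hdom hmeas ?_
  rw [ae_restrict_iff' measurableSet_Ioi]
  filter_upwards with u hu
  have h1 : (0:ℝ) ≤ u ^ k := Real.rpow_nonneg hu.le _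
  have h2 : (0:ℝ) < Real.exp (-u) := Real.exp_pos _
  have := hb u hu
  rw [Real.norm_eq_abs, abs_mul, abs_mul, abs_of_nonneg h1, abs_of_pos h2]
  calc u ^ k * Real.exp (-u) * |p u| ≤ u ^ k * Real.exp (-u) * c := by
        apply mul_le_mul_of_nonneg_left this (by positivity)
    _ = c * (Real.exp (-u) * u ^ k) := by ring

noncomputable def gg (x u : ℝ) : ℝ :=
  (u - 1) * (x ^ 2 + u) ^ (-(1/2) : ℝ) + u / 2 * (x ^ 2 + u) ^ (-(3/2) : ℝ)

lemma spos {x : ℝ} (hx : 0 < x) {u : ℝ} (hu : u ∈ Ioi (0:ℝ)) : 0 < x ^ 2 + u := by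
  have hu' : 0 < u := hu
  positivity

lemma cont_pow {x : ℝ} (hx : 0 < x) (q : ℝ) :
    ContinuousOn (fun u : ℝ => (x ^ 2 + u) ^ q) (Ioi 0) := by
  intro u hu
  have h1 : ContinuousAt (fun u : ℝ => x ^ 2 + u) u := by fun_prop
  exact ((Real.continuousAt_rpow_const _ q (Or.inl (ne_of_gt (spos hx hu)))).comp
    h1).continuousWithinAt

lemma bound_pow {x : ℝ} (hx : 0 < x) {q : ℝ} (hq : q ≤ 0) :
    ∀ u ∈ Ioi (0:ℝ), |(x ^ 2 + u) ^ q| ≤ (x ^ 2) ^ q := by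
  intro u hu
  rw [abs_of_nonneg (Real.rpow_nonneg (spos hx hu).le _)]
  exact Real.rpow_le_rpow_of_nonpos (by positivity) (by linarith [hu.out]) hq


lemma I1 {x k : ℝ} (hx : 0 < x) (hk : -1 < k) (q : ℝ) (hq : q ≤ 0) :
    IntegrableOn (fun u => u ^ k * Real.exp (-u) * (x ^ 2 + u) ^ q) (Ioi (0:ℝ)) :=
  integrable_aux hk (cont_pow hx q) (bound_pow hx hq)

lemma I4 {k : ℝ} (hk : -1 < k) :
    IntegrableOn (fun u => u ^ k * Real.exp (-u)) (Ioi (0:ℝ)) := by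
  have h := integrable_aux (c := 1) (p := fun _ => (1:ℝ)) hk continuousOn_const
    (fun u _ => by norm_num)
  exact h.congr_fun (fun u _ => by ring) measurableSet_Ioi

lemma I3 {x k : ℝ} (hx : 0 < x) (hk : -1 < k) :
    IntegrableOn (fun u => u ^ k * Real.exp (-u) * gg x u) (Ioi (0:ℝ)) := by
  have h1 := I1 hx (show (-1:ℝ) < k + 1 by linarith) (-(1/2) : ℝ) (by norm_num)
  have h2 := I1 hx hk (-(1/2) : ℝ) (by norm_num)
  have h3 := I1 hx (show (-1:ℝ) < k + 1 by linarith) (-(3/2) : ℝ) (by norm_num)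
  have h : IntegrableOn (fun u => (u ^ (k+1) * Real.exp (-u) * (x^2+u) ^ (-(1/2):ℝ)
      - u ^ k * Real.exp (-u) * (x^2+u) ^ (-(1/2):ℝ))
      + (1/2) * (u ^ (k+1) * Real.exp (-u) * (x^2+u) ^ (-(3/2):ℝ))) (Ioi (0:ℝ)) :=
    (h1.sub h2).add (h3.const_mul (1/2))
  refine h.congr_fun ?_ measurableSet_Ioi
  intro u hu
  have hrw : u ^ (k+1) = u ^ k * u := Real.rpow_add_one (ne_of_gt hu.out) k
  simp only [gg, hrw]
  ring


lemma ibp {x m : ℝ} (hx : 0 < x) (hm : -1 < m) :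
    ∫ u in Ioi (0:ℝ), u ^ m * Real.exp (-u) * gg x u
      = m * ∫ u in Ioi (0:ℝ), u ^ m * Real.exp (-u) * (x ^ 2 + u) ^ (-(1/2):ℝ) := by
  set φ : ℝ → ℝ := fun u => u ^ (m+1) * Real.exp (-u) * (x ^ 2 + u) ^ (-(1/2):ℝ) with hφ
  set ψ : ℝ → ℝ := fun u => (m+1) * (u ^ m * Real.exp (-u) * (x ^ 2 + u) ^ (-(1/2):ℝ))
      - u ^ (m+1) * Real.exp (-u) * (x ^ 2 + u) ^ (-(1/2):ℝ)
      - (1/2) * (u ^ (m+1) * Real.exp (-u) * (x ^ 2 + u) ^ (-(3/2):ℝ)) with hψ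
  have hm1 : (0:ℝ) < m + 1 := by linarith
  -- derivative
  have hderiv : ∀ u ∈ Ioi (0:ℝ), HasDerivAt φ (ψ u) u := by
    intro u hu
    have hu' : (0:ℝ) < u := hu
    have hs : (0:ℝ) < x ^ 2 + u := by positivity
    have h1 : HasDerivAt (fun u : ℝ => u ^ (m+1)) ((m+1) * u ^ m) u := by
      have := Real.hasDerivAt_rpow_const (x := u) (p := m+1) (Or.inl hu'.ne')
      simpa [add_sub_cancel_right] using this
    have h2 : HasDerivAt (fun u : ℝ => Real.exp (-u)) (-Real.exp (-u)) u := by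
      simpa using (hasDerivAt_neg u).exp
    have h3 : HasDerivAt (fun u : ℝ => (x ^ 2 + u) ^ (-(1/2):ℝ))
        (1 * (-(1/2)) * (x ^ 2 + u) ^ (-(1/2) - 1 : ℝ)) u :=
      (HasDerivAt.rpow_const ((hasDerivAt_id u).const_add (x ^ 2)) (Or.inl hs.ne'))
    have h := (h1.mul h2).mul h3
    refine h.congr_deriv ?_
    have e1 : ((-(1/2):ℝ) - 1) = (-(3/2):ℝ) := by norm_num
    rw [hψ, e1, Pi.mul_apply]
    ring
  -- continuity at 0
  have hφ0 : φ 0 = 0 := by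
    simp [hφ, Real.zero_rpow (ne_of_gt hm1)]
  have hcont : ContinuousWithinAt φ (Ici (0:ℝ)) 0 := by
    apply ContinuousAt.continuousWithinAt
    have c1 : ContinuousAt (fun u : ℝ => u ^ (m+1)) 0 :=
      Real.continuousAt_rpow_const 0 (m+1) (Or.inr hm1.le)
    have c2 : ContinuousAt (fun u : ℝ => Real.exp (-u)) 0 := by fun_prop
    have c3 : ContinuousAt (fun u : ℝ => (x ^ 2 + u) ^ (-(1/2):ℝ)) 0 := by
      have hb : ContinuousAt (fun u : ℝ => x ^ 2 + u) 0 := by fun_prop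
      exact (Real.continuousAt_rpow_const _ _ (Or.inl (by positivity))).comp hb
    exact (c1.mul c2).mul c3
  -- limit at infinity
  have htop : Tendsto φ atTop (𝓝 0) := by
    have hg : Tendsto (fun u : ℝ => (x^2) ^ (-(1/2):ℝ) * (u ^ (m+1) * Real.exp (-u)))
        atTop (𝓝 0) := by
      have := tendsto_rpow_mul_exp_neg_mul_atTop_nhds_zero (m+1) 1 one_pos
      simp only [neg_mul, one_mul] at this
      simpa using this.const_mul ((x^2) ^ (-(1/2):ℝ))
    apply squeeze_zero_norm' _ hg
    filter_upwards [Ioi_mem_atTop (0:ℝ)] with u hu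
    have hu' : (0:ℝ) < u := hu
    have hs : (0:ℝ) < x ^ 2 + u := by positivity
    have hb : (x ^ 2 + u) ^ (-(1/2):ℝ) ≤ (x^2) ^ (-(1/2):ℝ) :=
      Real.rpow_le_rpow_of_nonpos (by positivity) (by linarith) (by norm_num)
    have h1 : (0:ℝ) ≤ u ^ (m+1) := Real.rpow_nonneg hu'.le _
    have h2 : (0:ℝ) < Real.exp (-u) := Real.exp_pos _
    rw [Real.norm_eq_abs, hφ, abs_mul, abs_mul, abs_of_nonneg h1, abs_of_pos h2,
      abs_of_nonneg (Real.rpow_nonneg hs.le _)]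
    calc u ^ (m+1) * Real.exp (-u) * (x ^ 2 + u) ^ (-(1/2):ℝ)
        ≤ u ^ (m+1) * Real.exp (-u) * (x^2) ^ (-(1/2):ℝ) := by
          apply mul_le_mul_of_nonneg_left hb (by positivity)
      _ = (x^2) ^ (-(1/2):ℝ) * (u ^ (m+1) * Real.exp (-u)) := by ring
  -- integrability of ψ
  have hint : IntegrableOn ψ (Ioi (0:ℝ)) := by
    have h1 := (I1 hx hm (-(1/2):ℝ) (by norm_num)).const_mul (m+1)
    have h2 := I1 hx (show (-1:ℝ) < m + 1 by linarith) (-(1/2):ℝ) (by norm_num)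
    have h3 := (I1 hx (show (-1:ℝ) < m + 1 by linarith) (-(3/2):ℝ) (by norm_num)).const_mul (1/2)
    exact (h1.sub h2).sub h3
  have key : ∫ u in Ioi (0:ℝ), ψ u = 0 - φ 0 :=
    integral_Ioi_of_hasDerivAt_of_tendsto hcont hderiv hint htop
  rw [hφ0, sub_zero] at key
  -- conclude
  have hsplit : ∫ u in Ioi (0:ℝ), ψ u
      = m * (∫ u in Ioi (0:ℝ), u ^ m * Real.exp (-u) * (x ^ 2 + u) ^ (-(1/2):ℝ))
        - ∫ u in Ioi (0:ℝ), u ^ m * Real.exp (-u) * gg x u := by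
    have e : ∀ u ∈ Ioi (0:ℝ), ψ u
        = (m+1) * (u ^ m * Real.exp (-u) * (x ^ 2 + u) ^ (-(1/2):ℝ))
          - (u ^ m * Real.exp (-u) * gg x u
             + u ^ m * Real.exp (-u) * (x ^ 2 + u) ^ (-(1/2):ℝ)) := by
      intro u hu
      have hrw : u ^ (m+1) = u ^ m * u := Real.rpow_add_one (ne_of_gt hu.out) m
      simp only [hψ, gg, hrw]
      ring
    rw [setIntegral_congr_fun measurableSet_Ioi e]
    have hA : Integrable (fun u : ℝ => (m+1) * (u ^ m * Real.exp (-u) * (x ^ 2 + u) ^ (-(1/2):ℝ)))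
        (volume.restrict (Ioi 0)) := (I1 hx hm (-(1/2):ℝ) (by norm_num)).const_mul (m+1)
    have hB : Integrable (fun u : ℝ => u ^ m * Real.exp (-u) * gg x u
        + u ^ m * Real.exp (-u) * (x ^ 2 + u) ^ (-(1/2):ℝ)) (volume.restrict (Ioi 0)) :=
      (I3 hx hm).add (I1 hx hm (-(1/2):ℝ) (by norm_num))
    rw [integral_sub hA hB, integral_add (I3 hx hm) (I1 hx hm (-(1/2):ℝ) (by norm_num)),
      integral_const_mul]
    ring
  rw [hsplit] at key
  linarith


lemma cheb {w h g : ℝ → ℝ}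
    (hw : ∀ u ∈ Ioi (0:ℝ), 0 ≤ w u)
    (hcov : ∀ u ∈ Ioi (0:ℝ), ∀ v ∈ Ioi (0:ℝ), 0 ≤ (h u - h v) * (g u - g v))
    (iw : IntegrableOn w (Ioi 0))
    (iwh : IntegrableOn (fun u => w u * h u) (Ioi 0))
    (iwg : IntegrableOn (fun u => w u * g u) (Ioi 0))
    (iwhg : IntegrableOn (fun u => w u * h u * g u) (Ioi 0)) :
    (∫ u in Ioi (0:ℝ), w u * g u) * ∫ u in Ioi (0:ℝ), w u * h u ≤
      (∫ u in Ioi (0:ℝ), w u * h u * g u) * ∫ u in Ioi (0:ℝ), w u := by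
  set μ := volume.restrict (Ioi (0:ℝ)) with hμ
  have key : 0 ≤ ∫ p : ℝ × ℝ, w p.1 * w p.2 * (h p.1 - h p.2) * (g p.1 - g p.2) ∂ μ.prod μ := by
    apply integral_nonneg_of_ae
    have hps : μ.prod μ = (volume.prod volume).restrict ((Ioi 0) ×ˢ (Ioi 0)) :=
      Measure.prod_restrict _ _
    rw [hps]
    filter_upwards [self_mem_ae_restrict (measurableSet_Ioi.prod measurableSet_Ioi)]
    rintro ⟨u, v⟩ ⟨hu, hv⟩
    have := hcov u hu v hv
    have h1 := hw u hu
    have h2 := hw v hv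
    have : 0 ≤ w u * w v * ((h u - h v) * (g u - g v)) := by positivity
    calc (0:ℝ) ≤ w u * w v * ((h u - h v) * (g u - g v)) := this
      _ = w u * w v * (h u - h v) * (g u - g v) := by ring
  have iA : Integrable (fun p : ℝ × ℝ => (w p.1 * h p.1 * g p.1) * w p.2) (μ.prod μ) :=
    iwhg.mul_prod iw
  have iB : Integrable (fun p : ℝ × ℝ => (w p.1 * h p.1) * (w p.2 * g p.2)) (μ.prod μ) :=
    iwh.mul_prod iwg
  have iC : Integrable (fun p : ℝ × ℝ => (w p.1 * g p.1) * (w p.2 * h p.2)) (μ.prod μ) :=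
    iwg.mul_prod iwh
  have iD : Integrable (fun p : ℝ × ℝ => w p.1 * (w p.2 * h p.2 * g p.2)) (μ.prod μ) :=
    iw.mul_prod iwhg
  have expand : ∀ p : ℝ × ℝ, w p.1 * w p.2 * (h p.1 - h p.2) * (g p.1 - g p.2)
      = ((w p.1 * h p.1 * g p.1) * w p.2 + w p.1 * (w p.2 * h p.2 * g p.2))
        - ((w p.1 * h p.1) * (w p.2 * g p.2) + (w p.1 * g p.1) * (w p.2 * h p.2)) := by
    intro p; ring
  rw [show (fun p : ℝ × ℝ => w p.1 * w p.2 * (h p.1 - h p.2) * (g p.1 - g p.2))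
      = fun p : ℝ × ℝ => ((w p.1 * h p.1 * g p.1) * w p.2 + w p.1 * (w p.2 * h p.2 * g p.2))
        - ((w p.1 * h p.1) * (w p.2 * g p.2) + (w p.1 * g p.1) * (w p.2 * h p.2))
      from funext expand] at key
  have iAD : Integrable (fun p : ℝ × ℝ => (w p.1 * h p.1 * g p.1) * w p.2
      + w p.1 * (w p.2 * h p.2 * g p.2)) (μ.prod μ) := iA.add iD
  have iBC : Integrable (fun p : ℝ × ℝ => (w p.1 * h p.1) * (w p.2 * g p.2)
      + (w p.1 * g p.1) * (w p.2 * h p.2)) (μ.prod μ) := iB.add iC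
  rw [integral_sub iAD iBC, integral_add iA iD, integral_add iB iC,
    integral_prod_mul (μ := μ) (ν := μ) (fun t => w t * h t * g t) w,
    integral_prod_mul (μ := μ) (ν := μ) (fun t => w t * h t) (fun t => w t * g t),
    integral_prod_mul (μ := μ) (ν := μ) (fun t => w t * g t) (fun t => w t * h t),
    integral_prod_mul (μ := μ) (ν := μ) w (fun t => w t * h t * g t)] at key
  linarith

lemma gg_mono {x : ℝ} (hx : 0 < x) : MonotoneOn (gg x) (Ioi 0) := by
  have hderiv : ∀ u ∈ Ioi (0:ℝ), HasDerivAt (gg x)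
      ((1 * (x ^ 2 + u) ^ (-(1/2):ℝ) + (u - 1) * (1 * (-(1/2)) * (x ^ 2 + u) ^ (-(1/2) - 1 : ℝ)))
        + (1/2 * (x ^ 2 + u) ^ (-(3/2):ℝ) + u / 2 * (1 * (-(3/2)) * (x ^ 2 + u) ^ (-(3/2) - 1 : ℝ)))) u := by
    intro u hu
    have hu' : (0:ℝ) < u := hu
    have hs : (0:ℝ) < x ^ 2 + u := by positivity
    have hb : HasDerivAt (fun u : ℝ => x ^ 2 + u) 1 u := (hasDerivAt_id u).const_add (x ^ 2)
    have h1 : HasDerivAt (fun u : ℝ => u - 1) 1 u := (hasDerivAt_id u).sub_const 1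
    have h2 : HasDerivAt (fun u : ℝ => u / 2) (1/2) u := by
      simpa using (hasDerivAt_id u).div_const 2
    exact ((h1.mul (hb.rpow_const (Or.inl hs.ne'))).add
      (h2.mul (hb.rpow_const (Or.inl hs.ne'))))
  have hpos : ∀ u ∈ Ioi (0:ℝ), 0 <
      (1 * (x ^ 2 + u) ^ (-(1/2):ℝ) + (u - 1) * (1 * (-(1/2)) * (x ^ 2 + u) ^ (-(1/2) - 1 : ℝ)))
        + (1/2 * (x ^ 2 + u) ^ (-(3/2):ℝ) + u / 2 * (1 * (-(3/2)) * (x ^ 2 + u) ^ (-(3/2) - 1 : ℝ))) := by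
    intro u hu
    have hu' : (0:ℝ) < u := hu
    have hs : (0:ℝ) < x ^ 2 + u := by positivity
    have e1 : ((-(1/2):ℝ) - 1) = (-(3/2):ℝ) := by norm_num
    have e2 : ((-(3/2):ℝ) - 1) = (-(5/2):ℝ) := by norm_num
    rw [e1, e2]
    set s := x ^ 2 + u with hsdef
    have hC : (0:ℝ) < s ^ (-(5/2):ℝ) := Real.rpow_pos_of_pos hs _
    have hB : s ^ (-(3/2):ℝ) = s * s ^ (-(5/2):ℝ) := by
      rw [show (-(3/2):ℝ) = 1 + -(5/2) by norm_num, Real.rpow_add hs, Real.rpow_one]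
    have hA : s ^ (-(1/2):ℝ) = s * (s * s ^ (-(5/2):ℝ)) := by
      rw [show (-(1/2):ℝ) = 1 + (1 + -(5/2)) by norm_num, Real.rpow_add hs,
        Real.rpow_add hs, Real.rpow_one]
    rw [hA, hB]
    have hP : (0:ℝ) < s ^ 2 - (u - 2) / 2 * s - 3 * u / 4 := by
      rw [hsdef]; nlinarith [sq_nonneg x, sq_nonneg u, pow_pos hx 2]
    nlinarith [mul_pos hC hP]
  have hcont : ContinuousOn (gg x) (Ioi 0) :=
    fun u hu => ((hderiv u hu).continuousAt).continuousWithinAt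
  have := StrictMonoOn.monotoneOn <| strictMonoOn_of_deriv_pos (convex_Ioi (0:ℝ)) hcont ?_
  · exact this
  · intro u hu
    rw [interior_Ioi] at hu
    rw [(hderiv u hu).deriv]
    exact hpos u hu


lemma V_eq {x k : ℝ} (hx : 0 < x) (hk : -1 < k) :
    k * V k x = (∫ u in Ioi (0:ℝ), u ^ k * Real.exp (-u) * gg x u) / Real.Gamma (k + 1) := by
  have hiv : ∫ u in Ioi (0:ℝ), u ^ k * Real.exp (-u) / Real.sqrt (x ^ 2 + u)
      = ∫ u in Ioi (0:ℝ), u ^ k * Real.exp (-u) * (x ^ 2 + u) ^ (-(1/2):ℝ) := by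
    apply setIntegral_congr_fun measurableSet_Ioi
    intro u hu
    have hu' : (0:ℝ) < u := hu
    have hs : (0:ℝ) < x ^ 2 + u := by positivity
    show u ^ k * Real.exp (-u) / Real.sqrt (x ^ 2 + u)
        = u ^ k * Real.exp (-u) * (x ^ 2 + u) ^ (-(1/2):ℝ)
    rw [div_eq_mul_inv, Real.sqrt_eq_rpow, ← Real.rpow_neg hs.le]
  rw [V, hiv, ibp hx hk]
  ring

theorem mul_V_monotone_in_m (x : ℝ) (hx : 0 < x) :
    MonotoneOn (fun m => m * V m x) (Set.Ioi (-1)) := by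
  intro m hm m' hm' hle
  simp only
  have hm0 : (-1:ℝ) < m := hm
  have hm0' : (-1:ℝ) < m' := hm'
  have hm1 : (0:ℝ) < m + 1 := by linarith
  have hm1' : (0:ℝ) < m' + 1 := by linarith
  have hδ : (0:ℝ) ≤ m' - m := by linarith
  set w : ℝ → ℝ := fun u => u ^ m * Real.exp (-u) with hw
  set h : ℝ → ℝ := fun u => u ^ (m' - m) with hh
  -- Gamma values
  have hGam : ∀ k : ℝ, 0 < k + 1 →
      ∫ u in Ioi (0:ℝ), u ^ k * Real.exp (-u) = Real.Gamma (k + 1) := by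
    intro k hk
    rw [Real.Gamma_eq_integral hk]
    apply setIntegral_congr_fun measurableSet_Ioi
    intro u hu
    show u ^ k * Real.exp (-u) = Real.exp (-u) * u ^ (k + 1 - 1)
    rw [add_sub_cancel_right, mul_comm]
  -- pointwise identities on Ioi 0
  have hwh : ∀ u ∈ Ioi (0:ℝ), u ^ m' * Real.exp (-u) = w u * h u := by
    intro u hu
    have hu' : (0:ℝ) < u := hu
    rw [hw, hh]
    simp only
    rw [show (m':ℝ) = m + (m' - m) by ring, Real.rpow_add hu']
    ring
  have hwhg : ∀ u ∈ Ioi (0:ℝ), u ^ m' * Real.exp (-u) * gg x u = w u * h u * gg x u := by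
    intro u hu
    rw [hwh u hu]
  -- chebyshev
  have hcheb := cheb (w := w) (h := h) (g := gg x)
    (fun u hu => by
      have hu' : (0:ℝ) < u := hu
      have : (0:ℝ) ≤ u ^ m := Real.rpow_nonneg hu'.le _
      exact mul_nonneg this (Real.exp_pos _).le)
    (fun u hu v hv => by
      have hu' : (0:ℝ) < u := hu
      have hv' : (0:ℝ) < v := hv
      rcases le_total u v with huv | huv
      · have h1 : h u ≤ h v := Real.rpow_le_rpow hu'.le huv hδ
        have h2 : gg x u ≤ gg x v := gg_mono hx hu hv huv
        have hr : (h u - h v) * (gg x u - gg x v) = (h v - h u) * (gg x v - gg x u) := by ring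
        rw [hr]
        exact mul_nonneg (by linarith) (by linarith)
      · have h1 : h v ≤ h u := Real.rpow_le_rpow hv'.le huv hδ
        have h2 : gg x v ≤ gg x u := gg_mono hx hv hu huv
        exact mul_nonneg (by linarith) (by linarith))
    (I4 hm0)
    ((I4 hm0').congr_fun hwh measurableSet_Ioi)
    (I3 hx hm0)
    ((I3 hx hm0').congr_fun hwhg measurableSet_Ioi)
  -- rewrite the integrals in hcheb
  rw [← setIntegral_congr_fun measurableSet_Ioi hwh,
    ← setIntegral_congr_fun measurableSet_Ioi hwhg,
    hGam m (by linarith), hGam m' (by linarith)] at hcheb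
  rw [V_eq hx hm0, V_eq hx hm0']
  rw [div_le_div_iff₀ (Real.Gamma_pos_of_pos hm1) (Real.Gamma_pos_of_pos hm1')]
  linarith
end

section
/- For every real m ≥ 0 and every real x > 0, V_m is differentiable at x and satisfies the differential equation V_m′(x) = 2x (V_m(x) − V_{m−1}(x)), where for m = 0 one interprets V_{−1}(x) = 1/x. -/
open MeasureTheory Real Set Filter Topology

lemma contOn_aux (p c : ℝ) (hc : 0 < c) (n : ℕ) :
    ContinuousOn (fun u : ℝ => u ^ p * Real.exp (-u) / (Real.sqrt (c + u)) ^ n) (Ioi 0) := by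
  apply ContinuousOn.div
  · exact (continuousOn_id.rpow_const fun u hu => Or.inl (ne_of_gt hu)).mul
      (Real.continuous_exp.comp continuous_neg).continuousOn
  · exact ((Real.continuous_sqrt.comp (continuous_const.add continuous_id)).pow n).continuousOn
  · intro u hu
    have : 0 < Real.sqrt (c + u) := Real.sqrt_pos.2 (by simp at hu; linarith)
    positivity

lemma integrableOn_gamma (p : ℝ) (hp : -1 < p) :
    IntegrableOn (fun u : ℝ => u ^ p * Real.exp (-u)) (Ioi 0) := by
  have h0 := Real.GammaIntegral_convergent (show (0:ℝ) < p + 1 by linarith)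
  simpa [add_sub_cancel_right, mul_comm] using h0

lemma integrableOn_aux (p x : ℝ) (hp : -1 < p) (hx : 0 < x) (n : ℕ) :
    IntegrableOn (fun u : ℝ => u ^ p * Real.exp (-u) / (Real.sqrt (x ^ 2 + u)) ^ n)
      (Ioi 0) := by
  have hx2 : (0:ℝ) < x ^ 2 := by positivity
  have hbase := (integrableOn_gamma p hp).mul_const ((x ^ n)⁻¹)
  refine Integrable.mono' hbase ((contOn_aux p (x ^ 2) hx2 n).aestronglyMeasurable
    measurableSet_Ioi) ?_
  rw [ae_restrict_iff' measurableSet_Ioi]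
  filter_upwards with u hu
  have hu0 : (0:ℝ) < u := hu
  have hs : x ≤ Real.sqrt (x ^ 2 + u) := by
    calc x = Real.sqrt (x ^ 2) := (Real.sqrt_sq hx.le).symm
      _ ≤ _ := Real.sqrt_le_sqrt (by linarith)
  have hsp : (0:ℝ) < Real.sqrt (x ^ 2 + u) := lt_of_lt_of_le hx hs
  have hxn : (0:ℝ) < x ^ n := by positivity
  have hsn : x ^ n ≤ (Real.sqrt (x ^ 2 + u)) ^ n := pow_le_pow_left₀ hx.le hs n
  have hnum : (0:ℝ) ≤ u ^ p * Real.exp (-u) := by positivity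
  rw [Real.norm_eq_abs, abs_of_nonneg (by positivity)]
  rw [div_eq_mul_inv]
  gcongr

lemma hasDerivAt_inner (m u : ℝ) (hu : 0 < u) (y : ℝ) :
    HasDerivAt (fun y : ℝ => u ^ m * Real.exp (-u) / Real.sqrt (y ^ 2 + u))
      (-(y * (u ^ m * Real.exp (-u)) / (Real.sqrt (y ^ 2 + u)) ^ 3)) y := by
  set c := u ^ m * Real.exp (-u) with hc
  have hpos : 0 < y ^ 2 + u := by positivity
  have hs : 0 < Real.sqrt (y ^ 2 + u) := Real.sqrt_pos.2 hpos
  have h1 : HasDerivAt (fun y : ℝ => y ^ 2 + u) (2 * y) y := by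
    simpa using (hasDerivAt_pow 2 y).add_const u
  have h2 : HasDerivAt (fun y : ℝ => Real.sqrt (y ^ 2 + u))
      (1 / (2 * Real.sqrt (y ^ 2 + u)) * (2 * y)) y :=
    (Real.hasDerivAt_sqrt (ne_of_gt hpos)).comp y h1
  have h3 : HasDerivAt (fun y : ℝ => c / Real.sqrt (y ^ 2 + u))
      ((0 * Real.sqrt (y ^ 2 + u) - c * (1 / (2 * Real.sqrt (y ^ 2 + u)) * (2 * y)))
        / Real.sqrt (y ^ 2 + u) ^ 2) y := (hasDerivAt_const y c).div h2 (ne_of_gt hs)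
  convert h3 using 1
  rw [show Real.sqrt (y ^ 2 + u) ^ 3 = (y ^ 2 + u) * Real.sqrt (y ^ 2 + u) by
    rw [pow_succ, Real.sq_sqrt hpos.le], Real.sq_sqrt hpos.le]
  field_simp
  ring

lemma hasDerivAt_g (m x u : ℝ) (hx : 0 < x) (hu : 0 < u) :
    HasDerivAt (fun u : ℝ => u ^ m * Real.exp (-u) / Real.sqrt (x ^ 2 + u))
      (m * u ^ (m - 1) * Real.exp (-u) / Real.sqrt (x ^ 2 + u)
        - u ^ m * Real.exp (-u) / Real.sqrt (x ^ 2 + u)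
        - (1 / 2) * (u ^ m * Real.exp (-u) / (Real.sqrt (x ^ 2 + u)) ^ 3)) u := by
  have hpos : 0 < x ^ 2 + u := by positivity
  have hs : 0 < Real.sqrt (x ^ 2 + u) := Real.sqrt_pos.2 hpos
  have h1 : HasDerivAt (fun u : ℝ => u ^ m) (m * u ^ (m - 1)) u :=
    Real.hasDerivAt_rpow_const (Or.inl hu.ne')
  have h2 : HasDerivAt (fun u : ℝ => Real.exp (-u)) (Real.exp (-u) * -1) u :=
    (Real.hasDerivAt_exp (-u)).comp u (hasDerivAt_neg u)
  have hN := h1.mul h2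
  have hD : HasDerivAt (fun u : ℝ => Real.sqrt (x ^ 2 + u))
      (1 / (2 * Real.sqrt (x ^ 2 + u)) * 1) u :=
    (Real.hasDerivAt_sqrt (ne_of_gt hpos)).comp u ((hasDerivAt_id u).const_add (x ^ 2))
  have h3 : HasDerivAt (fun u : ℝ => u ^ m * Real.exp (-u) / Real.sqrt (x ^ 2 + u))
      (((m * u ^ (m - 1) * Real.exp (-u) + u ^ m * (Real.exp (-u) * -1)) * Real.sqrt (x ^ 2 + u)
        - u ^ m * Real.exp (-u) * (1 / (2 * Real.sqrt (x ^ 2 + u)) * 1))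
        / Real.sqrt (x ^ 2 + u) ^ 2) u := hN.div hD (ne_of_gt hs)
  have key : ∀ a b s : ℝ, s ≠ 0 →
      (a * s - b * (1 / (2 * s) * 1)) / s ^ 2 = a / s - 1 / 2 * (b / s ^ 3) := by
    intro a b s hs0
    field_simp
  have h4 := key (m * u ^ (m - 1) * Real.exp (-u) + u ^ m * (Real.exp (-u) * -1))
    (u ^ m * Real.exp (-u)) _ (ne_of_gt hs)
  rw [h4] at h3
  convert h3 using 1
  ring

lemma tendsto_aux (p x : ℝ) (hx : 0 < x) :
    Tendsto (fun u : ℝ => u ^ p * Real.exp (-u) / Real.sqrt (x ^ 2 + u)) atTop (𝓝 0) := by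
  have h1 : Tendsto (fun u : ℝ => u ^ p * Real.exp (-u) * x⁻¹) atTop (𝓝 0) := by
    have := (tendsto_rpow_mul_exp_neg_mul_atTop_nhds_zero p 1 one_pos).mul_const x⁻¹
    simpa using this
  apply tendsto_of_tendsto_of_tendsto_of_le_of_le' tendsto_const_nhds h1
  · filter_upwards [eventually_gt_atTop (0:ℝ)] with u hu
    have : 0 < Real.sqrt (x ^ 2 + u) := Real.sqrt_pos.2 (by positivity)
    positivity
  · filter_upwards [eventually_gt_atTop (0:ℝ)] with u hu
    have hs : x ≤ Real.sqrt (x ^ 2 + u) := by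
      calc x = Real.sqrt (x ^ 2) := (Real.sqrt_sq hx.le).symm
        _ ≤ _ := Real.sqrt_le_sqrt (by linarith)
    rw [div_eq_mul_inv]
    exact mul_le_mul_of_nonneg_left (inv_anti₀ hx hs) (by positivity)

/-- `V_m(x)` extended by the convention `V_{-1}(x) = 1/x`. -/
noncomputable def Vext (m x : ℝ) : ℝ := if m = -1 then 1 / x else V m x

set_option maxHeartbeats 1000000 in
lemma V_deriv_aux (m x : ℝ) (hm : 0 ≤ m) (hx : 0 < x) :
    HasDerivAt (fun y => V m y) (2 * x * (V m x - Vext (m - 1) x)) x := by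
  have hm1 : (-1:ℝ) < m := by linarith
  have hΓ : 0 < Real.Gamma (m + 1) := Real.Gamma_pos_of_pos (by linarith)
  have hx2 : (0:ℝ) < x ^ 2 := by positivity
  -- Step 1: differentiation under the integral sign
  have key : HasDerivAt
      (fun y => ∫ u in Ioi (0:ℝ), u ^ m * Real.exp (-u) / Real.sqrt (y ^ 2 + u))
      (∫ u in Ioi (0:ℝ), -(x * (u ^ m * Real.exp (-u)) / (Real.sqrt (x ^ 2 + u)) ^ 3)) x := by
    have hmeas : ∀ᶠ y in 𝓝 x, AEStronglyMeasurable
        (fun u : ℝ => u ^ m * Real.exp (-u) / Real.sqrt (y ^ 2 + u))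
        (volume.restrict (Ioi 0)) := by
      filter_upwards [Metric.ball_mem_nhds x (by positivity : (0:ℝ) < x / 2)] with y hy
      have hy0 : 0 < y := by
        rw [Metric.mem_ball, Real.dist_eq, abs_lt] at hy
        linarith [hy.1]
      have := (contOn_aux m (y ^ 2) (by positivity) 1).aestronglyMeasurable
        (μ := volume) measurableSet_Ioi
      simpa [pow_one] using this
    have hint : Integrable (fun u : ℝ => u ^ m * Real.exp (-u) / Real.sqrt (x ^ 2 + u))
        (volume.restrict (Ioi 0)) := by
      have := integrableOn_aux m x hm1 hx 1
      simp only [pow_one] at this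
      exact this
    have hmeas' : AEStronglyMeasurable
        (fun u : ℝ => -(x * (u ^ m * Real.exp (-u)) / (Real.sqrt (x ^ 2 + u)) ^ 3))
        (volume.restrict (Ioi 0)) := by
      have := ((contOn_aux m (x ^ 2) hx2 3).aestronglyMeasurable
        (μ := volume) measurableSet_Ioi).const_mul (-x)
      refine this.congr (Filter.Eventually.of_forall fun u => ?_)
      ring
    have hbound : ∀ᵐ u ∂(volume.restrict (Ioi (0:ℝ))), ∀ y ∈ Metric.ball x (x / 2),
        ‖-(y * (u ^ m * Real.exp (-u)) / (Real.sqrt (y ^ 2 + u)) ^ 3)‖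
          ≤ 2 * x * (u ^ m * Real.exp (-u)) / (x / 2) ^ 3 := by
      rw [ae_restrict_iff' measurableSet_Ioi]
      filter_upwards with u hu
      intro y hy
      have hu0 : (0:ℝ) < u := hu
      rw [Metric.mem_ball, Real.dist_eq, abs_lt] at hy
      have hy1 : x / 2 < y := by linarith [hy.1]
      have hy2 : y ≤ 2 * x := by linarith [hy.2]
      have hs : x / 2 ≤ Real.sqrt (y ^ 2 + u) := by
        calc x / 2 ≤ y := hy1.le
          _ = Real.sqrt (y ^ 2) := (Real.sqrt_sq (by linarith)).symm
          _ ≤ _ := Real.sqrt_le_sqrt (by linarith)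
      have hsp : 0 < Real.sqrt (y ^ 2 + u) := lt_of_lt_of_le (by positivity) hs
      rw [norm_neg, Real.norm_eq_abs, abs_of_nonneg (div_nonneg
        (mul_nonneg (by linarith) (by positivity)) (by positivity))]
      exact div_le_div₀ (by positivity)
        (mul_le_mul_of_nonneg_right hy2 (by positivity)) (by positivity)
        (pow_le_pow_left₀ (by positivity) hs 3)
    have hbint : Integrable (fun u : ℝ => 2 * x * (u ^ m * Real.exp (-u)) / (x / 2) ^ 3)
        (volume.restrict (Ioi 0)) :=
      ((integrableOn_gamma m hm1).const_mul (2 * x)).div_const ((x / 2) ^ 3)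
    have hdiff : ∀ᵐ u ∂(volume.restrict (Ioi (0:ℝ))), ∀ y ∈ Metric.ball x (x / 2),
        HasDerivAt (fun y : ℝ => u ^ m * Real.exp (-u) / Real.sqrt (y ^ 2 + u))
          (-(y * (u ^ m * Real.exp (-u)) / (Real.sqrt (y ^ 2 + u)) ^ 3)) y := by
      rw [ae_restrict_iff' measurableSet_Ioi]
      filter_upwards with u hu
      intro y _
      exact hasDerivAt_inner m u hu y
    exact (hasDerivAt_integral_of_dominated_loc_of_deriv_le (𝕜 := ℝ)
      (μ := volume.restrict (Ioi 0))
      (F := fun y u => u ^ m * Real.exp (-u) / Real.sqrt (y ^ 2 + u))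
      (F' := fun y u => -(y * (u ^ m * Real.exp (-u)) / (Real.sqrt (y ^ 2 + u)) ^ 3))
      (bound := fun u => 2 * x * (u ^ m * Real.exp (-u)) / (x / 2) ^ 3)
      (Metric.ball_mem_nhds x (by positivity : (0:ℝ) < x / 2))
      hmeas hint hmeas' hbound hbint hdiff).2
  -- Step 2: integration by parts
  have hcont : ContinuousWithinAt
      (fun u : ℝ => u ^ m * Real.exp (-u) / Real.sqrt (x ^ 2 + u)) (Ici 0) 0 := by
    apply ContinuousAt.continuousWithinAt
    apply ContinuousAt.div
    · exact (Real.continuousAt_rpow_const 0 m (Or.inr hm)).mul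
        (Real.continuous_exp.comp continuous_neg).continuousAt
    · exact (Real.continuous_sqrt.comp (continuous_const.add continuous_id)).continuousAt
    · simpa using (Real.sqrt_pos.2 (by positivity : (0:ℝ) < x ^ 2 + 0)).ne'
  have hint1 : IntegrableOn
      (fun u : ℝ => m * u ^ (m - 1) * Real.exp (-u) / Real.sqrt (x ^ 2 + u)) (Ioi 0) := by
    rcases eq_or_lt_of_le hm with h0 | h0
    · rw [← h0]
      simp
    · have heq : (fun u : ℝ => m * u ^ (m - 1) * Real.exp (-u) / Real.sqrt (x ^ 2 + u))
          = fun u : ℝ => m * (u ^ (m - 1) * Real.exp (-u) / (Real.sqrt (x ^ 2 + u)) ^ 1) := by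
        funext u
        rw [pow_one]
        ring
      rw [heq]
      exact (integrableOn_aux (m - 1) x (by linarith) hx 1).const_mul m
  have hint2 : IntegrableOn
      (fun u : ℝ => u ^ m * Real.exp (-u) / Real.sqrt (x ^ 2 + u)) (Ioi 0) := by
    simpa [pow_one] using integrableOn_aux m x hm1 hx 1
  have hint3 : IntegrableOn
      (fun u : ℝ => u ^ m * Real.exp (-u) / (Real.sqrt (x ^ 2 + u)) ^ 3) (Ioi 0) :=
    integrableOn_aux m x hm1 hx 3
  have hint3' : IntegrableOn
      (fun u : ℝ => 1 / 2 * (u ^ m * Real.exp (-u) / (Real.sqrt (x ^ 2 + u)) ^ 3)) (Ioi 0) :=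
    hint3.const_mul _
  have ibp := integral_Ioi_of_hasDerivAt_of_tendsto hcont
    (fun u hu => hasDerivAt_g m x u hx hu) ((hint1.sub hint2).sub hint3') (tendsto_aux m x hx)
  have h12 : Integrable (fun u : ℝ => m * u ^ (m - 1) * Real.exp (-u) / Real.sqrt (x ^ 2 + u)
      - u ^ m * Real.exp (-u) / Real.sqrt (x ^ 2 + u)) (volume.restrict (Ioi 0)) :=
    hint1.sub hint2
  rw [integral_sub h12 hint3', integral_sub hint1 hint2,
    integral_const_mul] at ibp
  -- the derivative of V
  have hval : (∫ u in Ioi (0:ℝ), -(x * (u ^ m * Real.exp (-u)) / (Real.sqrt (x ^ 2 + u)) ^ 3))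
      = -x * ∫ u in Ioi (0:ℝ), u ^ m * Real.exp (-u) / (Real.sqrt (x ^ 2 + u)) ^ 3 := by
    rw [← integral_const_mul]
    congr 1
    funext u
    ring
  have hder : HasDerivAt (fun y => V m y)
      ((1 / Real.Gamma (m + 1)) *
        ∫ u in Ioi (0:ℝ), -(x * (u ^ m * Real.exp (-u)) / (Real.sqrt (x ^ 2 + u)) ^ 3)) x := by
    have := HasDerivAt.const_mul (1 / Real.Gamma (m + 1)) key
    simpa [V] using this
  rw [hval] at hder
  convert hder using 1
  rcases eq_or_lt_of_le hm with h0 | h0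
  · -- m = 0
    subst h0
    simp only [zero_mul, zero_div, integral_zero, Real.rpow_zero, neg_zero, Real.exp_zero,
      add_zero, one_mul, zero_sub] at ibp
    rw [Real.sqrt_sq hx.le] at ibp
    simp only [V, Vext, show (0:ℝ) - 1 = -1 by norm_num, if_pos rfl, if_true, zero_add,
      Real.Gamma_one, Real.rpow_zero, one_mul]
    linear_combination (-2 * x) * ibp
  · -- 0 < m
    have hΓm : 0 < Real.Gamma m := Real.Gamma_pos_of_pos h0
    have hΓa : Real.Gamma (m + 1) = m * Real.Gamma m := Real.Gamma_add_one h0.ne'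
    have hVe : Vext (m - 1) x = V (m - 1) x := by
      rw [Vext, if_neg (by intro h; linarith [h])]
    have ht1 : (∫ u in Ioi (0:ℝ), m * u ^ (m - 1) * Real.exp (-u) / Real.sqrt (x ^ 2 + u))
        = m * ∫ u in Ioi (0:ℝ), u ^ (m - 1) * Real.exp (-u) / Real.sqrt (x ^ 2 + u) := by
      rw [← integral_const_mul]
      congr 1
      funext u
      ring
    simp only [Real.zero_rpow h0.ne', zero_mul, zero_div, sub_zero, zero_sub, neg_zero] at ibp
    rw [ht1] at ibp
    rw [hVe]
    simp only [V, sub_add_cancel, hΓa]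
    have hG1 : Real.Gamma m ≠ 0 := hΓm.ne'
    have hm0 : m ≠ 0 := h0.ne'
    field_simp
    linear_combination (-2) * ibp

theorem V_deriv (m x : ℝ) (hm : 0 ≤ m) (hx : 0 < x) :
    HasDerivAt (fun y => V m y) (2 * x * (V m x - Vext (m - 1) x)) x :=
  V_deriv_aux m x hm hx
end

section
/- For every real m > -1 and every fixed real x > 0, the function a ↦ a · V_m(a x) is strictly increasing on (0, ∞). Consequently a · V_m(a x) > V_m(x) when a > 1 and a · V_m(a x) < V_m(x) when 0 < a < 1; in particular (1/√2) V_m(|x|/√2) < V_m(|x|). -/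
open MeasureTheory Real Set

noncomputable def Faux (m x r : ℝ) : ℝ :=
  ∫ u in Set.Ioi (0:ℝ), u ^ m * Real.exp (-u) / Real.sqrt (x ^ 2 + r * u)

lemma Faux_integrable (m x r : ℝ) (hm : -1 < m) (hx : 0 < x) (hr : 0 ≤ r) :
    IntegrableOn (fun u => u ^ m * Real.exp (-u) / Real.sqrt (x ^ 2 + r * u))
      (Set.Ioi 0) := by
  have hGamma : IntegrableOn (fun u : ℝ => x⁻¹ * (Real.exp (-u) * u ^ m)) (Set.Ioi 0) := by
    have := (Real.GammaIntegral_convergent (by linarith : (0:ℝ) < m + 1)).const_mul x⁻¹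
    simp only [add_sub_cancel_right] at this
    exact this
  have hmeas : Measurable fun u : ℝ => u ^ m * Real.exp (-u) / Real.sqrt (x ^ 2 + r * u) := by
    fun_prop
  refine Integrable.mono hGamma hmeas.aestronglyMeasurable ?_
  filter_upwards [ae_restrict_mem measurableSet_Ioi] with u (hu : 0 < u)
  have hnum : 0 ≤ u ^ m * Real.exp (-u) :=
    mul_nonneg (Real.rpow_nonneg hu.le m) (Real.exp_pos _).le
  have hxle : x ≤ Real.sqrt (x ^ 2 + r * u) := by
    calc x = Real.sqrt (x ^ 2) := (Real.sqrt_sq hx.le).symm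
      _ ≤ Real.sqrt (x ^ 2 + r * u) := Real.sqrt_le_sqrt (by nlinarith)
  have h1 : u ^ m * Real.exp (-u) / Real.sqrt (x ^ 2 + r * u)
      ≤ u ^ m * Real.exp (-u) / x := by gcongr
  rw [Real.norm_eq_abs, Real.norm_eq_abs, abs_of_nonneg (div_nonneg hnum (Real.sqrt_nonneg _)),
    abs_of_nonneg (by positivity)]
  calc u ^ m * Real.exp (-u) / Real.sqrt (x ^ 2 + r * u)
      ≤ u ^ m * Real.exp (-u) / x := h1
    _ = x⁻¹ * (Real.exp (-u) * u ^ m) := by ring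

lemma Faux_strictAnti (m x : ℝ) (hm : -1 < m) (hx : 0 < x) {r s : ℝ}
    (hr : 0 ≤ r) (hrs : r < s) : Faux m x s < Faux m x r := by
  have hs : 0 ≤ s := hr.trans hrs.le
  have hfi := Faux_integrable m x r hm hx hr
  have hgi := Faux_integrable m x s hm hx hs
  set f := fun u : ℝ => u ^ m * Real.exp (-u) / Real.sqrt (x ^ 2 + r * u) with hf
  set g := fun u : ℝ => u ^ m * Real.exp (-u) / Real.sqrt (x ^ 2 + s * u) with hg
  have hpt : ∀ u ∈ Set.Ioi (0:ℝ), g u < f u := by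
    intro u hu
    have hu' : 0 < u := hu
    have hnum : 0 < u ^ m * Real.exp (-u) :=
      mul_pos (Real.rpow_pos_of_pos hu' m) (Real.exp_pos _)
    have h1 : (0:ℝ) < x ^ 2 + r * u := by positivity
    have h2 : Real.sqrt (x ^ 2 + r * u) < Real.sqrt (x ^ 2 + s * u) := by
      apply Real.sqrt_lt_sqrt h1.le
      nlinarith
    exact div_lt_div_of_pos_left hnum (Real.sqrt_pos.mpr h1) h2
  have hsub : IntegrableOn (fun u => f u - g u) (Set.Ioi 0) := hfi.sub hgi
  have hpos : 0 < ∫ u in Set.Ioi (0:ℝ), (f u - g u) := by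
    rw [setIntegral_pos_iff_support_of_nonneg_ae ?_ hsub]
    · have hsubset : Set.Ioi (0:ℝ) ⊆ Function.support (fun u => f u - g u) ∩ Set.Ioi 0 := by
        intro u hu
        exact ⟨sub_ne_zero.mpr (hpt u hu).ne', hu⟩
      calc (0:ENNReal) < ⊤ := by simp
        _ = volume (Set.Ioi (0:ℝ)) := by simp
        _ ≤ _ := measure_mono hsubset
    · filter_upwards [ae_restrict_mem measurableSet_Ioi] with u hu
      exact sub_nonneg.mpr (hpt u hu).le
  have := integral_sub hfi hgi
  unfold Faux
  rw [← hf, ← hg]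
  linarith [hpos, this ▸ hpos]

lemma scaled_V_eq (m x : ℝ) (hx : 0 < x) {a : ℝ} (ha : 0 < a) :
    a * V m (a * x) = (1 / Real.Gamma (m + 1)) * Faux m x (1 / a ^ 2) := by
  unfold V Faux
  rw [← mul_assoc, mul_comm a (1 / Real.Gamma (m + 1)), mul_assoc, ← integral_const_mul]
  congr 1
  apply setIntegral_congr_fun measurableSet_Ioi
  intro u hu
  have hu' : (0:ℝ) < u := hu
  have hS : (0:ℝ) < (a * x) ^ 2 + u := by positivity
  have hS' : Real.sqrt ((a * x) ^ 2 + u) ≠ 0 := (Real.sqrt_pos.mpr hS).ne'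
  have hsq : Real.sqrt (x ^ 2 + (1 / a ^ 2) * u) = Real.sqrt ((a * x) ^ 2 + u) / a := by
    rw [show x ^ 2 + (1 / a ^ 2) * u = ((a * x) ^ 2 + u) / a ^ 2 by field_simp]
    rw [Real.sqrt_div hS.le, Real.sqrt_sq ha.le]
  simp only [hsq]
  field_simp

theorem scaled_V_strictMono (m x : ℝ) (hm : -1 < m) (hx : 0 < x) :
    StrictMonoOn (fun a => a * V m (a * x)) (Set.Ioi 0) ∧
    (∀ a : ℝ, 1 < a → V m x < a * V m (a * x)) ∧
    (∀ a : ℝ, 0 < a → a < 1 → a * V m (a * x) < V m x) ∧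
    (1 / Real.sqrt 2) * V m (|x| / Real.sqrt 2) < V m |x| := by
  have hΓ : 0 < Real.Gamma (m + 1) := Real.Gamma_pos_of_pos (by linarith)
  have hmono : StrictMonoOn (fun a => a * V m (a * x)) (Set.Ioi 0) := by
    intro a ha b hb hab
    have ha' : (0:ℝ) < a := ha
    have hb' : (0:ℝ) < b := hb
    simp only
    rw [scaled_V_eq m x hx ha', scaled_V_eq m x hx hb']
    have h1 : (1 / b ^ 2 : ℝ) < 1 / a ^ 2 := by
      apply div_lt_div_of_pos_left one_pos (by positivity)
      nlinarith
    have := Faux_strictAnti m x hm hx (by positivity : (0:ℝ) ≤ 1 / b ^ 2) h1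
    have hΓ' : 0 < 1 / Real.Gamma (m + 1) := by positivity
    exact mul_lt_mul_of_pos_left this hΓ'
  have h2 : ∀ a : ℝ, 1 < a → V m x < a * V m (a * x) := by
    intro a haa
    have := hmono (Set.mem_Ioi.mpr one_pos) (Set.mem_Ioi.mpr (by linarith)) haa
    simpa using this
  have h3 : ∀ a : ℝ, 0 < a → a < 1 → a * V m (a * x) < V m x := by
    intro a ha0 ha1
    have := hmono (Set.mem_Ioi.mpr ha0) (Set.mem_Ioi.mpr one_pos) ha1
    simpa using this
  refine ⟨hmono, h2, h3, ?_⟩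
  have hs2 : (1:ℝ) < Real.sqrt 2 := by
    rw [show (1:ℝ) = Real.sqrt 1 by simp]
    exact Real.sqrt_lt_sqrt (by norm_num) (by norm_num)
  have hs2' : (0:ℝ) < Real.sqrt 2 := by linarith
  have := h3 (1 / Real.sqrt 2) (by positivity) ((div_lt_one hs2').mpr hs2)
  rw [abs_of_pos hx]
  convert this using 3
  field_simp
end

section
/- The function x ↦ V_0(x) is convex on (0, ∞). -/
open MeasureTheory Real Set

/-- The `m = 0` one-dimensional regularized Coulomb potential `V_0(x)`. -/
noncomputable def V0 (x : ℝ) : ℝ :=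
  ∫ u in Set.Ioi (0:ℝ), Real.exp (-u) / Real.sqrt (x ^ 2 + u)

lemma V0_eq {x : ℝ} (hx : 0 < x) :
    V0 x = ∫ t in Set.Ioi (0:ℝ), 2 * Real.exp (-(t ^ 2 + 2 * x * t)) := by
  have himg : (fun t : ℝ => t ^ 2 + 2 * x * t) '' Set.Ioi 0 = Set.Ioi 0 := by
    apply Set.eq_of_subset_of_subset
    · rintro u ⟨t, ht, rfl⟩
      simp only [Set.mem_Ioi] at ht ⊢
      positivity
    · rintro u hu
      simp only [Set.mem_Ioi] at hu
      refine ⟨-x + Real.sqrt (x ^ 2 + u), ?_, ?_⟩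
      · simp only [Set.mem_Ioi]
        have : x < Real.sqrt (x ^ 2 + u) := by
          have := Real.lt_sqrt (le_of_lt hx) (y := x ^ 2 + u)
          rw [this]; linarith
        linarith
      · have hsq : Real.sqrt (x ^ 2 + u) ^ 2 = x ^ 2 + u :=
          Real.sq_sqrt (by positivity)
        ring_nf
        nlinarith [hsq]
  have hderiv : ∀ t ∈ Set.Ioi (0:ℝ),
      HasDerivWithinAt (fun t : ℝ => t ^ 2 + 2 * x * t) (2 * t + 2 * x) (Set.Ioi 0) t := by
    intro t _
    have : HasDerivAt (fun t : ℝ => t ^ 2 + 2 * x * t) (2 * t + 2 * x) t := by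
      have h1 := (hasDerivAt_pow 2 t).add ((hasDerivAt_id t).const_mul (2 * x))
      simpa [mul_comm, Pi.add_def] using h1
    exact this.hasDerivWithinAt
  have hinj : Set.InjOn (fun t : ℝ => t ^ 2 + 2 * x * t) (Set.Ioi 0) := by
    intro a ha b hb hab
    simp only [Set.mem_Ioi] at ha hb
    simp only [] at hab
    have h : (a - b) * (a + b + 2 * x) = 0 := by linear_combination hab
    rcases mul_eq_zero.1 h with h | h
    · linarith
    · linarith
  have := integral_image_eq_integral_abs_deriv_smul measurableSet_Ioi hderiv hinj
    (fun u => Real.exp (-u) / Real.sqrt (x ^ 2 + u))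
  rw [V0]
  calc ∫ u in Set.Ioi (0:ℝ), Real.exp (-u) / Real.sqrt (x ^ 2 + u)
      = ∫ u in (fun t : ℝ => t ^ 2 + 2 * x * t) '' Set.Ioi 0,
          Real.exp (-u) / Real.sqrt (x ^ 2 + u) := by rw [himg]
    _ = ∫ t in Set.Ioi (0:ℝ),
          |2 * t + 2 * x| • (Real.exp (-(t ^ 2 + 2 * x * t)) /
            Real.sqrt (x ^ 2 + (t ^ 2 + 2 * x * t))) := this
    _ = ∫ t in Set.Ioi (0:ℝ), 2 * Real.exp (-(t ^ 2 + 2 * x * t)) := by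
        apply setIntegral_congr_fun measurableSet_Ioi
        intro t ht
        simp only [Set.mem_Ioi] at ht
        have hsqrt : Real.sqrt (x ^ 2 + (t ^ 2 + 2 * x * t)) = x + t := by
          rw [show x ^ 2 + (t ^ 2 + 2 * x * t) = (x + t) ^ 2 by ring,
            Real.sqrt_sq (by linarith)]
        have hxt : (0:ℝ) < x + t := by linarith
        simp only [smul_eq_mul, hsqrt]
        rw [abs_of_pos (by linarith)]
        field_simp
        ring

lemma integrable_aux_s10 {x : ℝ} (hx : 0 < x) :
    IntegrableOn (fun t : ℝ => 2 * Real.exp (-(t ^ 2 + 2 * x * t))) (Set.Ioi 0) := by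
  apply Integrable.const_mul
  apply Integrable.mono' (exp_neg_integrableOn_Ioi 0 (by positivity : (0:ℝ) < 2 * x))
  · exact (Continuous.aestronglyMeasurable (by continuity)).restrict
  · filter_upwards [ae_restrict_mem measurableSet_Ioi] with t ht
    simp only [Set.mem_Ioi] at ht
    rw [Real.norm_eq_abs, abs_of_pos (Real.exp_pos _)]
    apply Real.exp_le_exp.2
    nlinarith

theorem V0_convex : ConvexOn ℝ (Set.Ioi 0) V0 := by
  refine ⟨convex_Ioi 0, fun x hx y hy a b ha hb hab => ?_⟩
  simp only [Set.mem_Ioi] at hx hy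
  have hz : 0 < a * x + b * y := by
    rcases ha.lt_or_eq with h | h
    · nlinarith
    · rw [← h] at hab ⊢; simp at hab; nlinarith
  simp only [smul_eq_mul]
  rw [V0_eq hz, V0_eq hx, V0_eq hy]
  rw [← integral_const_mul, ← integral_const_mul, ← integral_add
    ((integrable_aux_s10 hx).const_mul a) ((integrable_aux_s10 hy).const_mul b)]
  apply setIntegral_mono_on (integrable_aux_s10 hz)
    (((integrable_aux_s10 hx).const_mul a).add ((integrable_aux_s10 hy).const_mul b))
    measurableSet_Ioi
  intro t ht
  have key := convexOn_exp.2 (Set.mem_univ (-(t ^ 2 + 2 * x * t)))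
    (Set.mem_univ (-(t ^ 2 + 2 * y * t))) ha hb hab
  simp only [smul_eq_mul] at key
  have heq : a * -(t ^ 2 + 2 * x * t) + b * -(t ^ 2 + 2 * y * t)
      = -(t ^ 2 + 2 * (a * x + b * y) * t) := by nlinarith [hab]
  rw [heq] at key
  simp only [Pi.add_apply]
  nlinarith [key]
end

section
/- For every real m ≥ 0 and every real x > 0, one has m / (2 (x² + m)^{3/2}) ≤ 1/x − V_m(x) < (m+1)/(2 x³). -/
open MeasureTheory Real Set
open scoped ENNReal

namespace VBoundsAux

lemma I_int {a r : ℝ} (ha : 0 < a) (hr : 0 < r) :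
    IntegrableOn (fun t : ℝ => t ^ (a - 1) * Real.exp (-(r * t))) (Ioi 0) := by
  have h := integrableOn_rpow_mul_exp_neg_mul_rpow (show (-1:ℝ) < a - 1 by linarith) (p := 1) zero_lt_one hr
  refine h.congr_fun (fun t ht => ?_) measurableSet_Ioi
  dsimp only; rw [Real.rpow_one, neg_mul]

lemma exp_neg_one_le_half : Real.exp (-1 : ℝ) ≤ 1 / 2 := by
  have h := Real.exp_one_gt_d9
  have h2 : (2:ℝ) ≤ Real.exp 1 := by linarith
  rw [Real.exp_neg]
  have : (Real.exp 1)⁻¹ ≤ 2⁻¹ := by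
    apply inv_anti₀ (by norm_num) h2
  linarith [this]

lemma aux_key {m t : ℝ} (hm : 0 ≤ m) (ht : 0 < t) :
    m * t * Real.exp (-(m * t)) ≤ 1 - (1 + t) ^ (-(m + 1)) := by
  have ha : (0:ℝ) < 1 + t := by linarith
  have hlog : t / (1 + t) ≤ Real.log (1 + t) := by
    have h := Real.log_le_sub_one_of_pos (show (0:ℝ) < (1 + t)⁻¹ by positivity)
    rw [Real.log_inv] at h
    have h2 : (1:ℝ) - (1 + t)⁻¹ = t / (1 + t) := by field_simp; ring
    linarith
  have hmono : (1 + t) ^ (-m : ℝ) ≤ Real.exp (-(m * (t / (1 + t)))) := by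
    rw [Real.rpow_def_of_pos ha, Real.exp_le_exp]
    have h3 : m * (t / (1 + t)) ≤ m * Real.log (1 + t) := mul_le_mul_of_nonneg_left hlog hm
    nlinarith
  rcases le_or_gt (m * t) 1 with hs | hs
  · have hsplit : (1 + t) ^ (-(m + 1)) = (1 + t) ^ (-m : ℝ) * (1 + t)⁻¹ := by
      rw [← Real.rpow_neg_one (1 + t), ← Real.rpow_add ha]
      ring_nf
    set r := m * t / (1 + t) with hr
    have hr0 : 0 ≤ r := by positivity
    have hrle : r ≤ m * t := by
      rw [hr, div_le_iff₀ ha]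
      nlinarith [mul_nonneg (mul_nonneg hm ht.le) ht.le]
    have hmr : m * (t / (1 + t)) = r := by rw [hr]; ring
    have hA : (1 + t) ^ (-(m + 1)) ≤ Real.exp (-r) * (1 + t)⁻¹ := by
      rw [hsplit]
      apply mul_le_mul_of_nonneg_right _ (by positivity)
      rw [← hmr]; exact hmono
    have hB : m * t * Real.exp (-(m * t)) ≤ m * t * Real.exp (-r) := by
      apply mul_le_mul_of_nonneg_left _ (by positivity)
      exact Real.exp_le_exp.mpr (by linarith)
    have hE : 1 + r ≤ Real.exp r := by linarith [Real.add_one_le_exp r]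
    have key3 : m * t + (1 + t)⁻¹ ≤ 1 + r := by
      have h4 : (m * t + (1 + t)⁻¹ - (1 + r)) * (1 + t) = m * t * t - t := by
        rw [hr]; field_simp; ring
      nlinarith [h4]
    have hC : m * t * Real.exp (-r) + Real.exp (-r) * (1 + t)⁻¹ ≤ 1 := by
      have htr := mul_le_mul_of_nonneg_right (le_trans key3 hE) (Real.exp_nonneg (-r))
      rw [← Real.exp_add] at htr
      simp only [add_neg_cancel, Real.exp_zero] at htr
      nlinarith [htr]
    linarith
  · have h2 : m * t * Real.exp (-(m * t)) ≤ Real.exp (-1 : ℝ) := by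
      have h := Real.add_one_le_exp (m * t - 1)
      have h5 := mul_le_mul_of_nonneg_right
        (show m * t ≤ Real.exp (m * t - 1) by linarith) (Real.exp_nonneg (-(m * t)))
      rwa [← Real.exp_add, show m * t - 1 + -(m * t) = -1 by ring] at h5
    have h1 : (1 + t) ^ (-(m + 1)) ≤ Real.exp (-1 : ℝ) := by
      rw [Real.rpow_def_of_pos ha, Real.exp_le_exp]
      have h6 : 1 + t ≤ (m + 1) * t := by nlinarith
      have h7 : 1 ≤ (m + 1) * (t / (1 + t)) := by
        rw [mul_div_assoc', le_div_iff₀ ha]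
        linarith
      have h8 : (m + 1) * (t / (1 + t)) ≤ (m + 1) * Real.log (1 + t) :=
        mul_le_mul_of_nonneg_left hlog (by linarith)
      nlinarith
    linarith [exp_neg_one_le_half]

lemma aux_upper_ptwise {x u : ℝ} (hx : 0 < x) (hu : 0 < u) :
    1 / x - 1 / Real.sqrt (x ^ 2 + u) < u / (2 * x ^ 3) := by
  set s := Real.sqrt (x ^ 2 + u) with hsdef
  have hs0 : 0 < s := Real.sqrt_pos.mpr (by positivity)
  have hs2 : s ^ 2 = x ^ 2 + u := Real.sq_sqrt (by positivity)
  have hxs : x < s := by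
    nlinarith [hs2, hu, add_pos hs0 hx]
  rw [div_sub_div _ _ hx.ne' hs0.ne', div_lt_div_iff₀ (by positivity) (by positivity)]
  have hu2 : u = s ^ 2 - x ^ 2 := by linarith [hs2]
  have h10 : 2 * x ^ 3 < (s + x) * (x * s) := by nlinarith [mul_pos hx hs0]
  have h11 : u * (x * s) = (s - x) * ((s + x) * (x * s)) := by rw [hu2]; ring
  have h12 := mul_lt_mul_of_pos_left h10 (sub_pos.mpr hxs)
  rw [h11]
  nlinarith [h12]

lemma w_int {m : ℝ} (hm : 0 ≤ m) :
    IntegrableOn (fun u : ℝ => u ^ m * Real.exp (-u)) (Ioi 0) := by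
  have h := Real.GammaIntegral_convergent (show 0 < m + 1 by linarith)
  refine h.congr_fun (fun u hu => ?_) measurableSet_Ioi
  rw [add_sub_cancel_right, mul_comm]

lemma w_val {m : ℝ} (hm : 0 ≤ m) :
    ∫ u in Ioi (0:ℝ), u ^ m * Real.exp (-u) = Real.Gamma (m + 1) := by
  have h := integral_rpow_mul_exp_neg_mul_Ioi (show 0 < m + 1 by linarith) one_pos
  rw [show ((1:ℝ)/1) = 1 by norm_num, Real.one_rpow, one_mul] at h
  rw [← h]
  refine setIntegral_congr_fun measurableSet_Ioi (fun u hu => ?_)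
  rw [add_sub_cancel_right, one_mul]

lemma wu_int {m : ℝ} (hm : 0 ≤ m) :
    IntegrableOn (fun u : ℝ => u ^ m * Real.exp (-u) * u) (Ioi 0) := by
  have h := Real.GammaIntegral_convergent (show 0 < m + 2 by linarith)
  refine h.congr_fun (fun u hu => ?_) measurableSet_Ioi
  have hu0 : (0:ℝ) < u := hu
  dsimp only; rw [show m + 2 - 1 = m + 1 by ring, Real.rpow_add hu0, Real.rpow_one]
  ring

lemma wu_val {m : ℝ} (hm : 0 ≤ m) :
    ∫ u in Ioi (0:ℝ), u ^ m * Real.exp (-u) * u = (m + 1) * Real.Gamma (m + 1) := by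
  have h := integral_rpow_mul_exp_neg_mul_Ioi (show 0 < m + 2 by linarith) one_pos
  rw [show ((1:ℝ)/1) = 1 by norm_num, Real.one_rpow, one_mul] at h
  have h2 : ∫ u in Ioi (0:ℝ), u ^ m * Real.exp (-u) * u
      = ∫ u in Ioi (0:ℝ), u ^ (m + 2 - 1) * Real.exp (-(1 * u)) := by
    refine setIntegral_congr_fun measurableSet_Ioi (fun u hu => ?_)
    have hu0 : (0:ℝ) < u := hu
    rw [show m + 2 - 1 = m + 1 by ring, Real.rpow_add hu0, Real.rpow_one, one_mul]
    ring
  rw [h2, h, show m + 2 = (m + 1) + 1 by ring, Real.Gamma_add_one (by linarith : m + 1 ≠ 0)]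

lemma x_le_sqrt {x : ℝ} (hx : 0 < x) {v : ℝ} (hv : 0 ≤ v) : x ≤ Real.sqrt (x ^ 2 + v) := by
  have hs0 : 0 ≤ Real.sqrt (x ^ 2 + v) := Real.sqrt_nonneg _
  have hs2 : Real.sqrt (x ^ 2 + v) ^ 2 = x ^ 2 + v := Real.sq_sqrt (by positivity)
  nlinarith [hs0, hs2]

lemma wf_meas {m x : ℝ} : AEStronglyMeasurable
    (fun u : ℝ => u ^ m * Real.exp (-u) / Real.sqrt (x ^ 2 + u))
    (volume.restrict (Ioi 0)) := by
  apply Measurable.aestronglyMeasurable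
  fun_prop

lemma wf_int {m x : ℝ} (hm : 0 ≤ m) (hx : 0 < x) :
    IntegrableOn (fun u : ℝ => u ^ m * Real.exp (-u) / Real.sqrt (x ^ 2 + u)) (Ioi 0) := by
  refine Integrable.mono' ((w_int hm).mul_const (1/x)) wf_meas ?_
  filter_upwards [ae_restrict_mem measurableSet_Ioi] with u hu
  have hu0 : (0:ℝ) < u := hu
  have hw0 : 0 ≤ u ^ m := Real.rpow_nonneg hu0.le m
  have hsx : x ≤ Real.sqrt (x ^ 2 + u) := x_le_sqrt hx hu0.le
  have hnn : 0 ≤ u ^ m * Real.exp (-u) / Real.sqrt (x ^ 2 + u) := by positivity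
  rw [Real.norm_eq_abs, abs_of_nonneg hnn, mul_one_div]
  gcongr


lemma s_nonneg {m x : ℝ} (hm : 0 ≤ m) (hx : 0 < x) :
    0 ≤ 1 / x - m / 2 * ((1 / (x ^ 2 + m)) ^ ((3:ℝ)/2)) := by
  have hxm : (0:ℝ) < x ^ 2 + m := by positivity
  have hq32 : ((1:ℝ) / (x ^ 2 + m)) ^ ((3:ℝ)/2)
      = Real.sqrt (1 / (x ^ 2 + m)) * (1 / (x ^ 2 + m)) := by
    rw [show (3:ℝ)/2 = 1/2 + 1 by norm_num, Real.rpow_add (by positivity), Real.rpow_one,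
      ← Real.sqrt_eq_rpow]
  have hS1 : Real.sqrt (1 / (x ^ 2 + m)) ≤ 1 / x := by
    have h1 : (1:ℝ) / (x ^ 2 + m) ≤ 1 / x ^ 2 := by
      apply one_div_le_one_div_of_le (by positivity)
      linarith
    calc Real.sqrt (1 / (x ^ 2 + m)) ≤ Real.sqrt (1 / x ^ 2) := Real.sqrt_le_sqrt h1
      _ = 1 / x := by
        rw [one_div, Real.sqrt_inv, Real.sqrt_sq hx.le, one_div]
  have hm1 : m * (1 / (x ^ 2 + m)) ≤ 1 := by
    rw [mul_one_div, div_le_one hxm]; nlinarith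
  have h2 : m / 2 * ((1 / (x ^ 2 + m)) ^ ((3:ℝ)/2))
      = (m * (1 / (x ^ 2 + m))) * Real.sqrt (1 / (x ^ 2 + m)) / 2 := by
    rw [hq32]; ring
  have h3 := mul_le_mul hm1 hS1 (Real.sqrt_nonneg _) zero_le_one
  rw [h2]
  have hx1 : 0 < 1 / x := by positivity
  linarith

lemma W_le {m x : ℝ} (hm : 0 ≤ m) (hx : 0 < x) :
    ∫ u in Ioi (0:ℝ), u ^ m * Real.exp (-u) / Real.sqrt (x ^ 2 + u)
      ≤ (1 / x - m / 2 * ((1 / (x ^ 2 + m)) ^ ((3:ℝ)/2))) * Real.Gamma (m + 1) := by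
  have hΓ : 0 < Real.Gamma (m + 1) := Real.Gamma_pos_of_pos (by linarith)
  have hc : (0:ℝ) < x ^ 2 := by positivity
  have hπ : (0:ℝ) < Real.sqrt π := Real.sqrt_pos.mpr Real.pi_pos
  set F : ℝ → ℝ → ℝ≥0∞ := fun u t =>
    ENNReal.ofReal (u ^ m * Real.exp (-u) *
      (t ^ (1/2 - 1 : ℝ) * Real.exp (-((x ^ 2 + u) * t)))) with hF
  have hFmeas : AEMeasurable (Function.uncurry F)
      ((volume.restrict (Ioi (0:ℝ))).prod (volume.restrict (Ioi (0:ℝ)))) := by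
    have hmeas : Measurable fun p : ℝ × ℝ =>
        ENNReal.ofReal (p.1 ^ m * Real.exp (-p.1) *
          (p.2 ^ (1/2 - 1 : ℝ) * Real.exp (-((x ^ 2 + p.1) * p.2)))) := by
      apply Measurable.ennreal_ofReal
      fun_prop
    exact hmeas.aemeasurable
  have hwf_nonneg : 0 ≤ᵐ[volume.restrict (Ioi (0:ℝ))]
      fun u : ℝ => u ^ m * Real.exp (-u) / Real.sqrt (x ^ 2 + u) := by
    filter_upwards [ae_restrict_mem measurableSet_Ioi] with u hu
    have hu0 : (0:ℝ) < u := hu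
    have h1 : 0 ≤ u ^ m := Real.rpow_nonneg hu0.le m
    positivity
  -- inner t-integral evaluation
  have hL : ∀ u ∈ Ioi (0:ℝ), (∫⁻ t in Ioi (0:ℝ), F u t)
      = ENNReal.ofReal (u ^ m * Real.exp (-u) / Real.sqrt (x ^ 2 + u))
        * ENNReal.ofReal (Real.sqrt π) := by
    intro u hu
    have hu0 : (0:ℝ) < u := hu
    have hcu : (0:ℝ) < x ^ 2 + u := by positivity
    have hw0 : 0 ≤ u ^ m * Real.exp (-u) :=
      mul_nonneg (Real.rpow_nonneg hu0.le m) (Real.exp_nonneg _)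
    calc (∫⁻ t in Ioi (0:ℝ), F u t)
        = ∫⁻ t in Ioi (0:ℝ), ENNReal.ofReal (u ^ m * Real.exp (-u))
            * ENNReal.ofReal (t ^ (1/2 - 1 : ℝ) * Real.exp (-((x ^ 2 + u) * t))) := by
          refine lintegral_congr (fun t => ?_)
          simp only [hF]
          rw [ENNReal.ofReal_mul hw0]
      _ = ENNReal.ofReal (u ^ m * Real.exp (-u))
            * ∫⁻ t in Ioi (0:ℝ), ENNReal.ofReal (t ^ (1/2 - 1 : ℝ)
              * Real.exp (-((x ^ 2 + u) * t))) :=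
          lintegral_const_mul' _ _ ENNReal.ofReal_ne_top
      _ = ENNReal.ofReal (u ^ m * Real.exp (-u))
            * ENNReal.ofReal (∫ t in Ioi (0:ℝ), t ^ (1/2 - 1 : ℝ)
              * Real.exp (-((x ^ 2 + u) * t))) := by
          rw [← ofReal_integral_eq_lintegral_ofReal (I_int (by norm_num) hcu) ?_]
          filter_upwards [ae_restrict_mem measurableSet_Ioi] with t ht
          have ht0 : (0:ℝ) < t := ht
          positivity
      _ = ENNReal.ofReal (u ^ m * Real.exp (-u) / Real.sqrt (x ^ 2 + u))
            * ENNReal.ofReal (Real.sqrt π) := by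
          rw [integral_rpow_mul_exp_neg_mul_Ioi (by norm_num : (0:ℝ) < 1/2) hcu,
            ← Real.sqrt_eq_rpow, Real.Gamma_one_half_eq, one_div, Real.sqrt_inv,
            ENNReal.ofReal_mul (inv_nonneg.mpr (Real.sqrt_nonneg _)), ← mul_assoc,
            ← ENNReal.ofReal_mul hw0, ← div_eq_mul_inv]
  -- inner u-integral evaluation
  have hR : ∀ t ∈ Ioi (0:ℝ), (∫⁻ u in Ioi (0:ℝ), F u t)
      = ENNReal.ofReal (t ^ (1/2 - 1 : ℝ) * Real.exp (-(x ^ 2 * t))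
          * ((1 / (1 + t)) ^ (m + 1))) * ENNReal.ofReal (Real.Gamma (m + 1)) := by
    intro t ht
    have ht0 : (0:ℝ) < t := ht
    have h1t : (0:ℝ) < 1 + t := by linarith
    have htp0 : 0 ≤ t ^ (1/2 - 1 : ℝ) * Real.exp (-(x ^ 2 * t)) := by positivity
    calc (∫⁻ u in Ioi (0:ℝ), F u t)
        = ∫⁻ u in Ioi (0:ℝ), ENNReal.ofReal (t ^ (1/2 - 1 : ℝ) * Real.exp (-(x ^ 2 * t)))
            * ENNReal.ofReal (u ^ (m + 1 - 1) * Real.exp (-((1 + t) * u))) := by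
          refine lintegral_congr (fun u => ?_)
          simp only [hF]
          rw [← ENNReal.ofReal_mul htp0]
          apply congrArg ENNReal.ofReal
          have hexp : Real.exp (-u) * Real.exp (-((x ^ 2 + u) * t))
              = Real.exp (-(x ^ 2 * t)) * Real.exp (-((1 + t) * u)) := by
            rw [← Real.exp_add, ← Real.exp_add]
            congr 1
            ring
          rw [show m + 1 - 1 = m by ring]
          linear_combination (u ^ m * t ^ ((1:ℝ)/2 - 1)) * hexp
      _ = ENNReal.ofReal (t ^ (1/2 - 1 : ℝ) * Real.exp (-(x ^ 2 * t)))
            * ∫⁻ u in Ioi (0:ℝ), ENNReal.ofReal (u ^ (m + 1 - 1)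
              * Real.exp (-((1 + t) * u))) :=
          lintegral_const_mul' _ _ ENNReal.ofReal_ne_top
      _ = ENNReal.ofReal (t ^ (1/2 - 1 : ℝ) * Real.exp (-(x ^ 2 * t)))
            * ENNReal.ofReal (∫ u in Ioi (0:ℝ), u ^ (m + 1 - 1)
              * Real.exp (-((1 + t) * u))) := by
          rw [← ofReal_integral_eq_lintegral_ofReal (I_int (by linarith : (0:ℝ) < m + 1) h1t) ?_]
          filter_upwards [ae_restrict_mem measurableSet_Ioi] with u hu
          have hu0 : (0:ℝ) < u := hu
          positivity
      _ = ENNReal.ofReal (t ^ (1/2 - 1 : ℝ) * Real.exp (-(x ^ 2 * t))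
            * ((1 / (1 + t)) ^ (m + 1))) * ENNReal.ofReal (Real.Gamma (m + 1)) := by
          rw [integral_rpow_mul_exp_neg_mul_Ioi (by linarith : (0:ℝ) < m + 1) h1t,
            ← ENNReal.ofReal_mul htp0,
            show t ^ (1/2 - 1 : ℝ) * Real.exp (-(x ^ 2 * t)) * ((1 / (1 + t)) ^ (m + 1)
                * Real.Gamma (m + 1))
              = t ^ (1/2 - 1 : ℝ) * Real.exp (-(x ^ 2 * t)) * (1 / (1 + t)) ^ (m + 1)
                * Real.Gamma (m + 1) by ring,
            ENNReal.ofReal_mul (mul_nonneg htp0 (Real.rpow_nonneg (by positivity) _))]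
  -- Tonelli
  have hswap := lintegral_lintegral_swap hFmeas
  have hstepL : (∫⁻ u in Ioi (0:ℝ), ∫⁻ t in Ioi (0:ℝ), F u t)
      = (∫⁻ u in Ioi (0:ℝ), ENNReal.ofReal (u ^ m * Real.exp (-u) / Real.sqrt (x ^ 2 + u)))
        * ENNReal.ofReal (Real.sqrt π) := by
    rw [setLIntegral_congr_fun_ae measurableSet_Ioi (ae_of_all _ hL)]
    exact lintegral_mul_const' _ _ ENNReal.ofReal_ne_top
  have hstepR : (∫⁻ t in Ioi (0:ℝ), ∫⁻ u in Ioi (0:ℝ), F u t)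
      = (∫⁻ t in Ioi (0:ℝ), ENNReal.ofReal (t ^ (1/2 - 1 : ℝ) * Real.exp (-(x ^ 2 * t))
          * ((1 / (1 + t)) ^ (m + 1)))) * ENNReal.ofReal (Real.Gamma (m + 1)) := by
    rw [setLIntegral_congr_fun_ae measurableSet_Ioi (ae_of_all _ hR)]
    exact lintegral_mul_const' _ _ ENNReal.ofReal_ne_top
  -- pointwise comparison on the t side
  have hptw : ∀ t ∈ Ioi (0:ℝ),
      t ^ (1/2 - 1 : ℝ) * Real.exp (-(x ^ 2 * t)) * ((1 / (1 + t)) ^ (m + 1))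
        ≤ t ^ (1/2 - 1 : ℝ) * Real.exp (-(x ^ 2 * t))
          - m * (t ^ (3/2 - 1 : ℝ) * Real.exp (-((x ^ 2 + m) * t))) := by
    intro t ht
    have ht0 : (0:ℝ) < t := ht
    have h1t : (0:ℝ) < 1 + t := by linarith
    have hP : 0 < t ^ (1/2 - 1 : ℝ) * Real.exp (-(x ^ 2 * t)) := by positivity
    have hkey := aux_key hm ht0
    have hq : ((1:ℝ) / (1 + t)) ^ (m + 1) = (1 + t) ^ (-(m + 1)) := by
      rw [one_div, Real.inv_rpow h1t.le, ← Real.rpow_neg h1t.le]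
    have hprod : m * (t ^ (3/2 - 1 : ℝ) * Real.exp (-((x ^ 2 + m) * t)))
        = t ^ (1/2 - 1 : ℝ) * Real.exp (-(x ^ 2 * t)) * (m * t * Real.exp (-(m * t))) := by
      rw [show (3/2 - 1 : ℝ) = (1/2 - 1) + 1 by norm_num, Real.rpow_add ht0, Real.rpow_one,
        show -((x ^ 2 + m) * t) = -(x ^ 2 * t) + -(m * t) by ring, Real.exp_add]
      ring
    rw [hq, hprod]
    nlinarith [mul_le_mul_of_nonneg_left hkey hP.le]
  have h_int_f1 : IntegrableOn (fun t : ℝ => t ^ (1/2 - 1 : ℝ)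
      * Real.exp (-(x ^ 2 * t))) (Ioi 0) := I_int (by norm_num) hc
  have h_int_f2 : IntegrableOn (fun t : ℝ => t ^ (3/2 - 1 : ℝ)
      * Real.exp (-((x ^ 2 + m) * t))) (Ioi 0) := I_int (by norm_num) (by positivity)
  have h_int_diff : IntegrableOn (fun t : ℝ => t ^ (1/2 - 1 : ℝ) * Real.exp (-(x ^ 2 * t))
      - m * (t ^ (3/2 - 1 : ℝ) * Real.exp (-((x ^ 2 + m) * t)))) (Ioi 0) :=
    h_int_f1.sub (h_int_f2.const_mul m)
  have h_diff_nonneg : 0 ≤ᵐ[volume.restrict (Ioi (0:ℝ))]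
      fun t : ℝ => t ^ (1/2 - 1 : ℝ) * Real.exp (-(x ^ 2 * t))
        - m * (t ^ (3/2 - 1 : ℝ) * Real.exp (-((x ^ 2 + m) * t))) := by
    filter_upwards [ae_restrict_mem measurableSet_Ioi] with t ht
    have ht0 : (0:ℝ) < t := ht
    have h1t : (0:ℝ) < 1 + t := by linarith
    have h0 : 0 ≤ t ^ (1/2 - 1 : ℝ) * Real.exp (-(x ^ 2 * t)) * ((1 / (1 + t)) ^ (m + 1)) := by
      positivity
    simp only [Pi.zero_apply]
    linarith [hptw t ht]
  have h_val_diff : (∫ t in Ioi (0:ℝ), (t ^ (1/2 - 1 : ℝ) * Real.exp (-(x ^ 2 * t))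
      - m * (t ^ (3/2 - 1 : ℝ) * Real.exp (-((x ^ 2 + m) * t)))))
      = Real.sqrt π * (1 / x - m / 2 * ((1 / (x ^ 2 + m)) ^ ((3:ℝ)/2))) := by
    rw [integral_sub h_int_f1 (h_int_f2.const_mul m), integral_const_mul,
      integral_rpow_mul_exp_neg_mul_Ioi (by norm_num : (0:ℝ) < 1/2) hc,
      integral_rpow_mul_exp_neg_mul_Ioi (by norm_num : (0:ℝ) < 3/2)
        (by positivity : (0:ℝ) < x ^ 2 + m),
      show (3:ℝ)/2 = 1/2 + 1 by norm_num,
      Real.Gamma_add_one (by norm_num : (1:ℝ)/2 ≠ 0), Real.Gamma_one_half_eq,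
      ← Real.sqrt_eq_rpow]
    rw [show (1:ℝ) / x ^ 2 = (x ^ 2)⁻¹ by rw [one_div], Real.sqrt_inv, Real.sqrt_sq hx.le]
    ring
  have hmono : (∫⁻ t in Ioi (0:ℝ), ENNReal.ofReal (t ^ (1/2 - 1 : ℝ)
      * Real.exp (-(x ^ 2 * t)) * ((1 / (1 + t)) ^ (m + 1))))
      ≤ ENNReal.ofReal (Real.sqrt π * (1 / x - m / 2 * ((1 / (x ^ 2 + m)) ^ ((3:ℝ)/2)))) := by
    rw [← h_val_diff, ofReal_integral_eq_lintegral_ofReal h_int_diff h_diff_nonneg]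
    refine lintegral_mono_ae ?_
    filter_upwards [ae_restrict_mem measurableSet_Ioi] with t ht
    exact ENNReal.ofReal_le_ofReal (hptw t ht)
  -- combine everything
  have hchain : ENNReal.ofReal (Real.sqrt π)
      * ENNReal.ofReal (∫ u in Ioi (0:ℝ), u ^ m * Real.exp (-u) / Real.sqrt (x ^ 2 + u))
      ≤ ENNReal.ofReal (Real.sqrt π)
        * ENNReal.ofReal ((1 / x - m / 2 * ((1 / (x ^ 2 + m)) ^ ((3:ℝ)/2)))
            * Real.Gamma (m + 1)) := by
    calc ENNReal.ofReal (Real.sqrt π)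
        * ENNReal.ofReal (∫ u in Ioi (0:ℝ), u ^ m * Real.exp (-u) / Real.sqrt (x ^ 2 + u))
        = (∫⁻ u in Ioi (0:ℝ), ENNReal.ofReal (u ^ m * Real.exp (-u) / Real.sqrt (x ^ 2 + u)))
            * ENNReal.ofReal (Real.sqrt π) := by
          rw [ofReal_integral_eq_lintegral_ofReal (wf_int hm hx) hwf_nonneg, mul_comm]
      _ = ∫⁻ u in Ioi (0:ℝ), ∫⁻ t in Ioi (0:ℝ), F u t := hstepL.symm
      _ = ∫⁻ t in Ioi (0:ℝ), ∫⁻ u in Ioi (0:ℝ), F u t := hswap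
      _ = (∫⁻ t in Ioi (0:ℝ), ENNReal.ofReal (t ^ (1/2 - 1 : ℝ) * Real.exp (-(x ^ 2 * t))
            * ((1 / (1 + t)) ^ (m + 1)))) * ENNReal.ofReal (Real.Gamma (m + 1)) := hstepR
      _ ≤ ENNReal.ofReal (Real.sqrt π * (1 / x - m / 2 * ((1 / (x ^ 2 + m)) ^ ((3:ℝ)/2))))
            * ENNReal.ofReal (Real.Gamma (m + 1)) := mul_le_mul_left hmono _
      _ = ENNReal.ofReal (Real.sqrt π)
            * ENNReal.ofReal ((1 / x - m / 2 * ((1 / (x ^ 2 + m)) ^ ((3:ℝ)/2)))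
                * Real.Gamma (m + 1)) := by
          rw [ENNReal.ofReal_mul (Real.sqrt_nonneg _), mul_assoc,
            ← ENNReal.ofReal_mul (s_nonneg hm hx)]
  have h2 := (ENNReal.mul_le_mul_iff_right
    (ne_of_gt (ENNReal.ofReal_pos.mpr hπ)) ENNReal.ofReal_ne_top).mp hchain
  exact (ENNReal.ofReal_le_ofReal_iff (mul_nonneg (s_nonneg hm hx) hΓ.le)).mp h2

end VBoundsAux

theorem V_large_x_bounds (m x : ℝ) (hm : 0 ≤ m) (hx : 0 < x) :
    m / (2 * (x ^ 2 + m) ^ ((3:ℝ)/2)) ≤ 1 / x - V m x ∧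
    1 / x - V m x < (m + 1) / (2 * x ^ 3) := by
  have hΓ : 0 < Real.Gamma (m + 1) := Real.Gamma_pos_of_pos (by linarith)
  have hVeq : V m x = (1 / Real.Gamma (m + 1)) *
      ∫ u in Set.Ioi (0:ℝ), u ^ m * Real.exp (-u) / Real.sqrt (x ^ 2 + u) := rfl
  constructor
  · -- lower bound
    have hW := VBoundsAux.W_le hm hx
    have hq_eq : m / 2 * ((1 / (x ^ 2 + m)) ^ ((3:ℝ)/2))
        = m / (2 * (x ^ 2 + m) ^ ((3:ℝ)/2)) := by
      rw [one_div, Real.inv_rpow (by positivity : (0:ℝ) ≤ x ^ 2 + m)]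
      have h0 : (0:ℝ) < (x ^ 2 + m) ^ ((3:ℝ)/2) := Real.rpow_pos_of_pos (by positivity) _
      field_simp
    have hVle : V m x ≤ 1 / x - m / 2 * ((1 / (x ^ 2 + m)) ^ ((3:ℝ)/2)) := by
      rw [hVeq]
      have h2 := mul_le_mul_of_nonneg_left hW
        (show (0:ℝ) ≤ 1 / Real.Gamma (m + 1) by positivity)
      have h3 : (1 / Real.Gamma (m + 1)) * ((1 / x - m / 2 * ((1 / (x ^ 2 + m)) ^ ((3:ℝ)/2)))
          * Real.Gamma (m + 1))
          = 1 / x - m / 2 * ((1 / (x ^ 2 + m)) ^ ((3:ℝ)/2)) := by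
        field_simp
      rw [h3] at h2
      exact h2
    linarith [hq_eq]
  · -- upper bound
    set W := ∫ u in Set.Ioi (0:ℝ), u ^ m * Real.exp (-u) / Real.sqrt (x ^ 2 + u) with hWdef
    have h_int_w := VBoundsAux.w_int hm
    have h_int_wu := VBoundsAux.wu_int hm
    have h_int_wf := VBoundsAux.wf_int hm hx
    have h1 : IntegrableOn (fun u : ℝ => u ^ m * Real.exp (-u) * u / (2 * x ^ 3)) (Ioi 0) :=
      h_int_wu.div_const _
    have h2 : IntegrableOn (fun u : ℝ => u ^ m * Real.exp (-u) / x) (Ioi 0) :=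
      h_int_w.div_const _
    have hg_pos : ∀ u ∈ Ioi (0:ℝ), 0 < u ^ m * Real.exp (-u) * u / (2 * x ^ 3)
        - u ^ m * Real.exp (-u) / x + u ^ m * Real.exp (-u) / Real.sqrt (x ^ 2 + u) := by
      intro u hu
      have hu0 : (0:ℝ) < u := hu
      have hw : 0 < u ^ m * Real.exp (-u) :=
        mul_pos (Real.rpow_pos_of_pos hu0 m) (Real.exp_pos _)
      have hs0 : 0 < Real.sqrt (x ^ 2 + u) := Real.sqrt_pos.mpr (by positivity)
      have haux := VBoundsAux.aux_upper_ptwise hx hu0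
      have hexpand : u ^ m * Real.exp (-u) * u / (2 * x ^ 3) - u ^ m * Real.exp (-u) / x
          + u ^ m * Real.exp (-u) / Real.sqrt (x ^ 2 + u)
          = (u ^ m * Real.exp (-u)) * (u / (2 * x ^ 3)
              - (1 / x - 1 / Real.sqrt (x ^ 2 + u))) := by
        field_simp
        ring
      rw [hexpand]
      apply mul_pos hw
      linarith
    have hD_pos : 0 < ∫ u in Ioi (0:ℝ),
        (u ^ m * Real.exp (-u) * u / (2 * x ^ 3) - u ^ m * Real.exp (-u) / x
          + u ^ m * Real.exp (-u) / Real.sqrt (x ^ 2 + u)) := by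
      refine (setIntegral_pos_iff_support_of_nonneg_ae ?_ ?_).mpr ?_
      · filter_upwards [ae_restrict_mem measurableSet_Ioi] with u hu
        simp only [Pi.zero_apply]
        exact (hg_pos u hu).le
      · exact (h1.sub h2).add h_int_wf
      · have hsub : Ioi (0:ℝ) ⊆ (Function.support fun u : ℝ =>
            u ^ m * Real.exp (-u) * u / (2 * x ^ 3) - u ^ m * Real.exp (-u) / x
              + u ^ m * Real.exp (-u) / Real.sqrt (x ^ 2 + u)) ∩ Ioi 0 := by
          intro u hu
          exact Set.mem_inter (ne_of_gt (hg_pos u hu)) hu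
        refine lt_of_lt_of_le ?_ (measure_mono hsub)
        simp [Real.volume_Ioi]
    have hD_val : (∫ u in Ioi (0:ℝ),
        (u ^ m * Real.exp (-u) * u / (2 * x ^ 3) - u ^ m * Real.exp (-u) / x
          + u ^ m * Real.exp (-u) / Real.sqrt (x ^ 2 + u)))
        = (m + 1) * Real.Gamma (m + 1) / (2 * x ^ 3) - Real.Gamma (m + 1) / x + W := by
      have h12 : IntegrableOn (fun u : ℝ => u ^ m * Real.exp (-u) * u / (2 * x ^ 3)
          - u ^ m * Real.exp (-u) / x) (Ioi 0) := h1.sub h2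
      rw [integral_add h12 h_int_wf, integral_sub h1 h2, integral_div, integral_div,
        VBoundsAux.wu_val hm, VBoundsAux.w_val hm]
    rw [hD_val] at hD_pos
    rw [hVeq]
    have hW_gt : Real.Gamma (m + 1) / x - (m + 1) * Real.Gamma (m + 1) / (2 * x ^ 3) < W := by
      linarith
    have h3 := (div_lt_div_iff_of_pos_right hΓ).mpr hW_gt
    have h4 : (Real.Gamma (m + 1) / x - (m + 1) * Real.Gamma (m + 1) / (2 * x ^ 3))
        / Real.Gamma (m + 1) = 1 / x - (m + 1) / (2 * x ^ 3) := by
      field_simp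
    rw [h4] at h3
    have h5 : W / Real.Gamma (m + 1) = (1 / Real.Gamma (m + 1)) * W := by ring
    rw [h5] at h3
    linarith
end

section
/- For every real m ≥ 1 and every real x > 0, V_m satisfies the recursion V_m(x) = (1/m) [ (m − 1/2 − x²) V_{m−1}(x) + x² V_{m−2}(x) ], where for m − 2 = −1 one interprets V_{−1}(x) = 1/x. Consequently, for every positive integer m and x > 0, V_m(x) = (1/(2m)) [ (1 − 2x²) V_{m−1}(x) + Σ_{k=0}^{m−2} V_k(x) + 2x ]. -/
open MeasureTheory Real Set Finset

lemma intA {c x : ℝ} (hc : -1 < c) (hx : 0 < x) :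
    IntegrableOn (fun u : ℝ => u ^ c * Real.exp (-u) / Real.sqrt (x ^ 2 + u)) (Ioi 0) := by
  have hG : IntegrableOn (fun u : ℝ => Real.exp (-u) * u ^ c) (Ioi 0) := by
    simpa using Real.GammaIntegral_convergent (show (0:ℝ) < c + 1 by linarith)
  refine Integrable.mono' (hG.const_mul (1/x)) ?_ ?_
  · apply ContinuousOn.aestronglyMeasurable ?_ measurableSet_Ioi
    apply ContinuousOn.div
    · exact fun u hu => ((Real.continuousAt_rpow_const u c (Or.inl (ne_of_gt hu))).mul
        ((Real.continuous_exp.comp continuous_neg).continuousAt)).continuousWithinAt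
    · exact (Real.continuous_sqrt.comp (continuous_const.add continuous_id)).continuousOn
    · intro u hu
      have hu' : (0:ℝ) < u := hu
      have : (0:ℝ) < x ^ 2 + u := by positivity
      exact (Real.sqrt_pos.2 this).ne'
  · rw [ae_restrict_iff' measurableSet_Ioi]
    filter_upwards with u hu
    have hu0 : (0:ℝ) < u := hu
    have h1 : (0:ℝ) < x ^ 2 + u := by positivity
    have hnn : 0 ≤ u ^ c * Real.exp (-u) / Real.sqrt (x ^ 2 + u) := by positivity
    rw [Real.norm_eq_abs, abs_of_nonneg hnn, mul_comm (Real.exp (-u)), one_div, inv_mul_eq_div]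
    gcongr
    calc x = Real.sqrt (x ^ 2) := (Real.sqrt_sq hx.le).symm
        _ ≤ Real.sqrt (x ^ 2 + u) := Real.sqrt_le_sqrt (by linarith)

lemma hasDerivF {a x : ℝ} (hx : 0 < x) {u : ℝ} (hu : 0 < u) :
    HasDerivAt (fun t : ℝ => t ^ a * Real.exp (-t) * Real.sqrt (x ^ 2 + t))
      (a * x ^ 2 * (u ^ (a-1) * Real.exp (-u) / Real.sqrt (x ^ 2 + u))
        + (a + 1/2 - x ^ 2) * (u ^ a * Real.exp (-u) / Real.sqrt (x ^ 2 + u))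
        - u ^ (a+1) * Real.exp (-u) / Real.sqrt (x ^ 2 + u)) u := by
  have hpos : (0:ℝ) < x ^ 2 + u := by positivity
  have h1 : HasDerivAt (fun t : ℝ => t ^ a) (a * u ^ (a-1)) u :=
    Real.hasDerivAt_rpow_const (Or.inl hu.ne')
  have h2 : HasDerivAt (fun t : ℝ => Real.exp (-t)) (-Real.exp (-u)) u := by
    simpa [Function.comp_def] using (Real.hasDerivAt_exp (-u)).comp u ((hasDerivAt_id u).neg)
  have h3 : HasDerivAt (fun t : ℝ => Real.sqrt (x ^ 2 + t)) (1 / (2 * Real.sqrt (x ^ 2 + u))) u := by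
    simpa [Function.comp_def] using (Real.hasDerivAt_sqrt hpos.ne').comp u
      ((hasDerivAt_const u (x ^ 2)).add (hasDerivAt_id u))
  have h := (h1.mul h2).mul h3
  refine h.congr_deriv ?_
  symm
  have hs : Real.sqrt (x ^ 2 + u) ≠ 0 := (Real.sqrt_pos.2 hpos).ne'
  have hs2 : Real.sqrt (x ^ 2 + u) * Real.sqrt (x ^ 2 + u) = x ^ 2 + u :=
    Real.mul_self_sqrt hpos.le
  have hua : u ^ (a-1) * u = u ^ a := by
    rw [← Real.rpow_add_one hu.ne' (a-1)]; norm_num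
  have hua2 : u ^ (a+1) = u ^ a * u := Real.rpow_add_one hu.ne' a
  have hx2 : x ^ 2 = Real.sqrt (x ^ 2 + u) * Real.sqrt (x ^ 2 + u) - u := by linarith
  simp only [Pi.mul_apply]
  rw [hua2, ← hua]
  field_simp
  linear_combination (2 * u - 2 * a) * hs2

lemma tendstoF {a x : ℝ} (hx : 0 < x) :
    Filter.Tendsto (fun t : ℝ => t ^ a * Real.exp (-t) * Real.sqrt (x ^ 2 + t))
      Filter.atTop (nhds 0) := by
  have hA : Filter.Tendsto (fun t : ℝ => t ^ a * Real.exp (-(1/2) * t)) Filter.atTop (nhds 0) :=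
    tendsto_rpow_mul_exp_neg_mul_atTop_nhds_zero a (1/2) (by norm_num)
  have hB : Filter.Tendsto (fun t : ℝ => t ^ (1/2 : ℝ) * Real.exp (-(1/2) * t))
      Filter.atTop (nhds 0) :=
    tendsto_rpow_mul_exp_neg_mul_atTop_nhds_zero (1/2) (1/2) (by norm_num)
  have hcomp : Filter.Tendsto (fun t : ℝ => x ^ 2 + t) Filter.atTop Filter.atTop :=
    Filter.tendsto_atTop_add_const_left Filter.atTop (x ^ 2) Filter.tendsto_id
  have hB' : Filter.Tendsto
      (fun t : ℝ => (x ^ 2 + t) ^ (1/2 : ℝ) * Real.exp (-(1/2) * (x ^ 2 + t)))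
      Filter.atTop (nhds 0) := hB.comp hcomp
  have h := hA.mul (hB'.const_mul (Real.exp ((1/2) * x ^ 2)))
  simp only [mul_zero, zero_mul] at h
  refine h.congr (fun t => ?_)
  have ht : Real.sqrt (x ^ 2 + t) = (x ^ 2 + t) ^ (1/2 : ℝ) := Real.sqrt_eq_rpow _
  have he : Real.exp (-(1/2)*t) * (Real.exp ((1/2) * x ^ 2) * Real.exp (-(1/2)*(x ^ 2 + t)))
      = Real.exp (-t) := by
    rw [← Real.exp_add, ← Real.exp_add]
    ring_nf
  rw [ht]
  linear_combination (t ^ a * (x ^ 2 + t) ^ (1/2 : ℝ)) * he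

lemma key {a x : ℝ} (ha : 0 ≤ a) (hx : 0 < x) :
    ∫ u in Ioi (0:ℝ),
      (a * x ^ 2 * (u ^ (a-1) * Real.exp (-u) / Real.sqrt (x ^ 2 + u))
        + (a + 1/2 - x ^ 2) * (u ^ a * Real.exp (-u) / Real.sqrt (x ^ 2 + u))
        - u ^ (a+1) * Real.exp (-u) / Real.sqrt (x ^ 2 + u))
      = -((0:ℝ) ^ a * x) := by
  have hcont : ContinuousWithinAt
      (fun t : ℝ => t ^ a * Real.exp (-t) * Real.sqrt (x ^ 2 + t)) (Ici 0) 0 := by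
    refine ContinuousWithinAt.mul (ContinuousWithinAt.mul ?_ ?_) ?_
    · exact (Real.continuousAt_rpow_const 0 a (Or.inr ha)).continuousWithinAt
    · exact (Real.continuous_exp.comp continuous_neg).continuousAt.continuousWithinAt
    · exact (Real.continuous_sqrt.comp (continuous_const.add continuous_id)).continuousAt.continuousWithinAt
  have hint : IntegrableOn (fun u : ℝ =>
      a * x ^ 2 * (u ^ (a-1) * Real.exp (-u) / Real.sqrt (x ^ 2 + u))
        + (a + 1/2 - x ^ 2) * (u ^ a * Real.exp (-u) / Real.sqrt (x ^ 2 + u))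
        - u ^ (a+1) * Real.exp (-u) / Real.sqrt (x ^ 2 + u)) (Ioi 0) := by
    rcases ha.eq_or_lt with rfl | ha'
    · simp only [zero_mul, zero_add]
      exact (((intA (by norm_num) hx).const_mul _)).sub
        (by have := intA (show (-1:ℝ) < 0 + 1 by norm_num) hx; simp at this ⊢; exact this)
    · exact (((intA (by linarith) hx).const_mul _).add
        ((intA (by linarith) hx).const_mul _)).sub (intA (by linarith) hx)
  have := integral_Ioi_of_hasDerivAt_of_tendsto hcont
    (fun u hu => hasDerivF hx hu) hint (tendstoF hx)
  rw [this, zero_sub]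
  norm_num [Real.sqrt_sq hx.le]

noncomputable def Ig (x c : ℝ) : ℝ :=
  ∫ u in Set.Ioi (0:ℝ), u ^ c * Real.exp (-u) / Real.sqrt (x ^ 2 + u)

lemma Irec {a x : ℝ} (ha : 0 ≤ a) (hx : 0 < x) :
    Ig x (a+1) = (a + 1/2 - x ^ 2) * Ig x a + a * x ^ 2 * Ig x (a-1) + (0:ℝ) ^ a * x := by
  rcases ha.eq_or_lt with rfl | ha'
  · have k := key (le_refl (0:ℝ)) hx
    have i2 : IntegrableOn (fun u : ℝ => ((0:ℝ) + 1/2 - x ^ 2) *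
        (u ^ (0:ℝ) * Real.exp (-u) / Real.sqrt (x ^ 2 + u))) (Ioi 0) :=
      (intA (by norm_num) hx).const_mul _
    have i3 : IntegrableOn (fun u : ℝ => u ^ ((0:ℝ) + 1) * Real.exp (-u) /
        Real.sqrt (x ^ 2 + u)) (Ioi 0) := intA (by norm_num) hx
    simp only [zero_mul, zero_add] at k i2 i3
    rw [MeasureTheory.integral_sub i2 i3, MeasureTheory.integral_const_mul] at k
    simp only [Ig, zero_mul]
    rw [show (0:ℝ) + 1 = 1 by norm_num]
    linear_combination -k
  · have k := key ha hx
    have i1 : IntegrableOn (fun u : ℝ => a * x ^ 2 *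
        (u ^ (a - 1) * Real.exp (-u) / Real.sqrt (x ^ 2 + u))) (Ioi 0) :=
      (intA (by linarith) hx).const_mul _
    have i2 : IntegrableOn (fun u : ℝ => (a + 1/2 - x ^ 2) *
        (u ^ a * Real.exp (-u) / Real.sqrt (x ^ 2 + u))) (Ioi 0) :=
      (intA (by linarith) hx).const_mul _
    have i3 : IntegrableOn (fun u : ℝ => u ^ (a + 1) * Real.exp (-u) /
        Real.sqrt (x ^ 2 + u)) (Ioi 0) := intA (by linarith) hx
    have i12 : IntegrableOn (fun u : ℝ =>
        a * x ^ 2 * (u ^ (a - 1) * Real.exp (-u) / Real.sqrt (x ^ 2 + u)) +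
        (a + 1/2 - x ^ 2) * (u ^ a * Real.exp (-u) / Real.sqrt (x ^ 2 + u))) (Ioi 0) := i1.add i2
    rw [MeasureTheory.integral_sub i12 i3, MeasureTheory.integral_add i1 i2,
      MeasureTheory.integral_const_mul, MeasureTheory.integral_const_mul] at k
    simp only [Ig]
    linear_combination -k

lemma part1 : ∀ m x : ℝ, 1 ≤ m → 0 < x →
    V m x = (1 / m) *
      ((m - 1/2 - x ^ 2) * V (m - 1) x + x ^ 2 * Vext (m - 2) x) := by
  intro m x hm hx
  have hVg : ∀ c : ℝ, V c x = (1 / Real.Gamma (c + 1)) * Ig x c := fun c => rfl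
  rcases eq_or_lt_of_le hm with rfl | h
  · have k := Irec (le_refl (0:ℝ)) hx
    rw [show (0:ℝ) + 1 = 1 by norm_num, Real.rpow_zero] at k
    have hVe : Vext ((1:ℝ) - 2) x = 1 / x := by
      rw [show (1:ℝ) - 2 = -1 by norm_num]; simp [Vext]
    rw [hVe, hVg, hVg, show (1:ℝ) - 1 = 0 by norm_num]
    rw [show (1:ℝ) + 1 = 2 by norm_num, Real.Gamma_two, show (0:ℝ) + 1 = 1 by norm_num,
      Real.Gamma_one]
    rw [k]
    field_simp
    ring
  · have h0 : m ≠ 0 := by linarith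
    have h1 : m - 1 ≠ 0 := by intro h'; rw [sub_eq_zero] at h'; linarith
    have hg1 : 0 < Real.Gamma (m - 1) := Real.Gamma_pos_of_pos (by linarith)
    have k := Irec (show (0:ℝ) ≤ m - 1 by linarith) hx
    rw [show m - 1 + 1 = m by ring, show m - 1 - 1 = m - 2 by ring,
      Real.zero_rpow h1, zero_mul, add_zero] at k
    have hVe : Vext (m - 2) x = V (m - 2) x := if_neg (by intro h'; rw [sub_eq_iff_eq_add] at h'; norm_num at h'; linarith)
    have G1 : Real.Gamma (m + 1) = m * Real.Gamma m := Real.Gamma_add_one h0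
    have G2 : Real.Gamma m = (m - 1) * Real.Gamma (m - 1) := by
      have := Real.Gamma_add_one h1
      rwa [show m - 1 + 1 = m by ring] at this
    rw [hVe, hVg, hVg, hVg, show m - 1 + 1 = m by ring, show m - 2 + 1 = m - 1 by ring,
      G1, G2, k]
    have hgm : Real.Gamma (m - 1) ≠ 0 := hg1.ne'
    field_simp
    ring

lemma Cprime (n : ℕ) {x : ℝ} (hx : 0 < x) :
    2 * x ^ 2 * Vext ((n:ℝ) - 1) x =
      (∑ k ∈ Finset.range n, V (k:ℝ) x) + 2 * x - 2 * (n:ℝ) * V (n:ℝ) x := by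
  induction n with
  | zero =>
    simp only [Nat.cast_zero, zero_sub, Finset.range_zero, Finset.sum_empty, zero_mul, mul_zero]
    simp only [Vext, if_pos rfl, ↓reduceIte]
    field_simp
    ring
  | succ n ih =>
    have hne : ((n:ℝ)) ≠ -1 := by
      have : (0:ℝ) ≤ n := Nat.cast_nonneg n
      linarith
    have hVe : Vext ((n:ℝ)) x = V (n:ℝ) x := if_neg hne
    have hp := part1 ((n:ℝ) + 1) x (by have : (0:ℝ) ≤ n := Nat.cast_nonneg n; linarith) hx
    rw [show (n:ℝ) + 1 - 1 = (n:ℝ) by ring, show (n:ℝ) + 1 - 2 = (n:ℝ) - 1 by ring] at hp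
    have hn1 : ((n:ℝ) + 1) ≠ 0 := by have : (0:ℝ) ≤ n := Nat.cast_nonneg n; positivity
    have h2 : ((n:ℝ) + 1) * V ((n:ℝ) + 1) x =
        ((n:ℝ) + 1 - 1/2 - x ^ 2) * V (n:ℝ) x + x ^ 2 * Vext ((n:ℝ) - 1) x := by
      rw [hp]; field_simp
    push_cast
    rw [show (n:ℝ) + 1 - 1 = (n:ℝ) by ring, hVe, Finset.sum_range_succ]
    linear_combination ih + 2 * h2

theorem V_recursion :
    (∀ m x : ℝ, 1 ≤ m → 0 < x →
      V m x = (1 / m) *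
        ((m - 1/2 - x ^ 2) * V (m - 1) x + x ^ 2 * Vext (m - 2) x)) ∧
    ∀ (m : ℕ) (x : ℝ), 1 ≤ m → 0 < x →
      V (m : ℝ) x = (1 / (2 * (m : ℝ))) *
        ((1 - 2 * x ^ 2) * V ((m : ℝ) - 1) x +
          (∑ k ∈ Finset.range (m - 1), V (k : ℝ) x) + 2 * x) := by
  refine ⟨part1, ?_⟩
  intro m x hm hx
  obtain ⟨n, rfl⟩ : ∃ n, m = n + 1 := ⟨m - 1, (Nat.succ_pred_eq_of_pos hm).symm⟩
  have hn0 : (0:ℝ) ≤ n := Nat.cast_nonneg n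
  have hp := part1 ((n:ℝ) + 1) x (by linarith) hx
  rw [show (n:ℝ) + 1 - 1 = (n:ℝ) by ring, show (n:ℝ) + 1 - 2 = (n:ℝ) - 1 by ring] at hp
  have hc := Cprime n hx
  have hn1 : ((n:ℝ) + 1) ≠ 0 := by positivity
  have h2 : ((n:ℝ) + 1) * V ((n:ℝ) + 1) x =
      ((n:ℝ) + 1 - 1/2 - x ^ 2) * V (n:ℝ) x + x ^ 2 * Vext ((n:ℝ) - 1) x := by
    rw [hp]; field_simp
  simp only [Nat.add_sub_cancel]
  push_cast
  rw [show (n:ℝ) + 1 - 1 = (n:ℝ) by ring]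
  have key2 : 2 * ((n:ℝ) + 1) * V ((n:ℝ) + 1) x =
      (1 - 2 * x ^ 2) * V (n:ℝ) x + (∑ k ∈ Finset.range n, V (k:ℝ) x) + 2 * x := by
    linear_combination 2 * h2 + hc
  rw [← key2]
  field_simp
end
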